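/- arXiv:1802.01608 — 6 statements merged into one kernel-verified Lean document; each statement's English description precedes it below -/
import Mathlib

section
/- For a linear ordering U of V(G) given as u_1, u_2, ..., u_n and its cyclic rotation U' given as u_2, u_3, ..., u_n, u_1, the maximum length of a U-monotonic cycle equals the maximum length of a U'-monotonic cycle. -/
open SimpleGraph

/-- A monotonic cycle with respect to an ordering relation `lt`:
a nonempty list of distinct vertices, strictly increasing w.r.t. `lt`,
and if it has length at least 2, consecutive vertices are adjacent and
the last vertex is adjacent to the first. -/
def MonoCycle {V : Type*} (G : SimpleGraph V) (lt : V → V → Prop) (l : List V) : Prop :=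
  l ≠ [] ∧ l.Nodup ∧ l.Chain' lt ∧
    (2 ≤ l.length → l.Chain' G.Adj ∧
      ∀ a b, l.head? = some a → l.getLast? = some b → G.Adj b a)

/-- The maximum length of a monotonic cycle for the ordering relation `lt`. -/
noncomputable def maxCycleLen {V : Type*} (G : SimpleGraph V) (lt : V → V → Prop) : ℕ :=
  sSup {m | ∃ l : List V, MonoCycle G lt l ∧ l.length = m}

/-- The circular altitude of a graph: the minimum over all linear orderings
(injections of the vertex set into `ℕ`) of the maximum length of a monotonic cycle. -/
noncomputable def circAlt {V : Type*} (G : SimpleGraph V) : ℕ :=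
  sInf {n | ∃ f : V → ℕ, Function.Injective f ∧
    maxCycleLen G (fun a b => f a < f b) = n}

/-- Reversing a monotonic cycle gives a monotonic cycle for the flipped order. -/
lemma monoCycle_reverse {V : Type*} {G : SimpleGraph V} {lt : V → V → Prop} {l : List V}
    (h : MonoCycle G lt l) : MonoCycle G (flip lt) l.reverse := by
  obtain ⟨hne, hnd, hch, hcyc⟩ := h
  refine ⟨by simpa using hne, by simpa using hnd, ?_, ?_⟩
  · exact List.isChain_reverse.mpr hch
  · intro hlen
    obtain ⟨hadj, hlast⟩ := hcyc (by simpa using hlen)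
    constructor
    · rw [List.Chain', List.isChain_reverse]
      exact hadj.imp (fun _ _ hab => hab.symm)
    · intro a b ha hb
      rw [List.head?_reverse] at ha
      rw [List.getLast?_reverse] at hb
      exact (hlast b a hb ha).symm

/-- Transferring a monotonic cycle from an order where `v₀` is minimal to an
order where `v₀` is maximal, the two orders agreeing away from `v₀`. -/
lemma monoCycle_transfer {V : Type*} {G : SimpleGraph V} (lt lt' : V → V → Prop)
    (htr : Transitive lt) (htr' : Transitive lt') (v₀ : V)
    (hmin : ∀ v, ¬ lt v v₀)
    (hmax : ∀ v, v ≠ v₀ → lt' v v₀)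
    (hagree : ∀ a b, a ≠ v₀ → b ≠ v₀ → lt a b → lt' a b)
    {l : List V} (h : MonoCycle G lt l) :
    ∃ l', MonoCycle G lt' l' ∧ l'.length = l.length := by
  haveI : IsTrans V lt := ⟨fun _ _ _ h1 h2 => htr h1 h2⟩
  haveI : IsTrans V lt' := ⟨fun _ _ _ h1 h2 => htr' h1 h2⟩
  obtain ⟨hne, hnd, hch, hcyc⟩ := h
  rw [List.Chain', List.isChain_iff_pairwise] at hch
  by_cases hv : v₀ ∈ l
  · -- v₀ must be the head of l
    obtain ⟨a, t, rfl⟩ := List.exists_cons_of_ne_nil hne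
    have hav : a = v₀ := by
      rcases List.mem_cons.mp hv with h' | h'
      · exact h'.symm
      · exact absurd ((List.pairwise_cons.mp hch).1 v₀ h') (hmin a)
    subst hav
    have hnotmem : a ∉ t := (List.nodup_cons.mp hnd).1
    have hndt : t.Nodup := (List.nodup_cons.mp hnd).2
    refine ⟨t ++ [a], ⟨by simp, ?_, ?_, ?_⟩, by simp [Nat.add_comm]⟩
    · rw [List.nodup_append]
      exact ⟨hndt, List.nodup_singleton a, fun x hx y hy => by
        simp only [List.mem_singleton] at hy; subst hy; rintro rfl; exact hnotmem hx⟩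
    · rw [List.Chain', List.isChain_iff_pairwise, List.pairwise_append]
      refine ⟨?_, List.pairwise_singleton _ _, ?_⟩
      · refine ((List.pairwise_cons.mp hch).2).imp_of_mem (fun {x y} hx hy hxy => ?_)
        exact hagree x y (fun hh => hnotmem (hh ▸ hx)) (fun hh => hnotmem (hh ▸ hy)) hxy
      · intro x hx b hb
        rw [List.mem_singleton] at hb
        subst hb
        exact hmax x (fun hh => hnotmem (hh ▸ hx))
    · intro hlen
      match t with
      | [] => simp at hlen
      | c :: t2 =>
        obtain ⟨hadj, hlast⟩ := hcyc (by simp)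
        have hchadj := List.isChain_cons_cons.mp hadj
        constructor
        · rw [List.Chain', List.isChain_append]
          refine ⟨hchadj.2, List.isChain_singleton _, ?_⟩
          intro x hx y hy
          rw [List.head?_cons, Option.mem_some_iff] at hy
          subst hy
          have hg : (c :: t2).getLast? = some ((c :: t2).getLast (by simp)) :=
            List.getLast?_eq_getLast _
          rw [Option.mem_def, hg, Option.some_inj] at hx
          subst hx
          refine hlast a ((c :: t2).getLast (by simp)) rfl ?_
          rw [List.getLast?_cons_cons, hg]
        · intro x y hx hy
          simp only [List.cons_append, List.head?_cons, Option.some_inj] at hx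
          rw [List.getLast?_concat, Option.some_inj] at hy
          subst hx; subst hy
          exact hchadj.1
  · refine ⟨l, ⟨hne, hnd, ?_, hcyc⟩, rfl⟩
    rw [List.Chain', List.isChain_iff_pairwise]
    refine hch.imp_of_mem (fun {x y} hx hy hxy => ?_)
    exact hagree x y (fun hh => hv (hh ▸ hx)) (fun hh => hv (hh ▸ hy)) hxy

/-- The maximum length of a monotonic cycle is invariant under cyclic rotation
of the linear ordering: if `e : Fin n ≃ V` enumerates the vertices, then the
rotated ordering `(finRotate n).trans e` (sending position `k` to `e (k+1)`)
yields the same maximum length of a monotonic cycle. -/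
theorem maxCycleLen_rotate {V : Type*} [Finite V] (G : SimpleGraph V) (n : ℕ)
    (hn : Nat.card V = n) (e : Fin n ≃ V) :
    maxCycleLen G (fun a b => ((e.symm a : Fin n) : ℕ) < ((e.symm b : Fin n) : ℕ)) =
    maxCycleLen G (fun a b => ((((finRotate n).trans e).symm a : Fin n) : ℕ) <
      ((((finRotate n).trans e).symm b : Fin n) : ℕ)) := by
  match n, hn, e with
  | 0, hn, e =>
    haveI : IsEmpty V := by
      rcases Nat.card_eq_zero.mp hn with h | h
      · exact h
      · exact absurd ‹Finite V› h.not_finite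
    have key : ∀ (lt : V → V → Prop),
        {m | ∃ l : List V, MonoCycle G lt l ∧ l.length = m} = ∅ := by
      intro lt
      ext m
      simp only [Set.mem_setOf_eq, Set.mem_empty_iff_false, iff_false, not_exists]
      rintro l ⟨⟨hne, _⟩, _⟩
      match l with
      | [] => exact hne rfl
      | a :: _ => exact (IsEmpty.false a).elim
    unfold maxCycleLen
    rw [key, key]
  | (m + 1), hn, e =>
    set lt : V → V → Prop :=
      fun a b => ((e.symm a : Fin (m + 1)) : ℕ) < ((e.symm b : Fin (m + 1)) : ℕ) with hlt
    set lt' : V → V → Prop :=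
      fun a b => ((((finRotate (m + 1)).trans e).symm a : Fin (m + 1)) : ℕ) <
        ((((finRotate (m + 1)).trans e).symm b : Fin (m + 1)) : ℕ) with hlt'
    set v₀ : V := e 0 with hv₀
    have hp' : ∀ a : V, (((finRotate (m + 1)).trans e).symm a : Fin (m + 1)) =
        (finRotate (m + 1)).symm (e.symm a) := fun a => rfl
    have hsymm0 : (finRotate (m + 1)).symm 0 = Fin.last m := by
      rw [Equiv.symm_apply_eq, finRotate_last]
    -- the key value computation
    have key : ∀ i : Fin (m + 1), i ≠ 0 →
        (((finRotate (m + 1)).symm i : Fin (m + 1)) : ℕ) = (i : ℕ) - 1 := by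
      intro i hi
      set j : Fin (m + 1) := (finRotate (m + 1)).symm i with hj
      have hji : finRotate (m + 1) j = i := Equiv.apply_symm_apply _ _
      rw [finRotate_succ_apply] at hji
      have hjlast : j ≠ Fin.last m := by
        intro hh
        apply hi
        rw [← hji, hh]
        simp [finRotate_last]
      have hjlt : j < Fin.last m := lt_of_le_of_ne (Fin.le_last j) hjlast
      have hval : ((j + 1 : Fin (m + 1)) : ℕ) = (j : ℕ) + 1 := Fin.val_add_one_of_lt hjlt
      have : (i : ℕ) = (j : ℕ) + 1 := by rw [← hji, hval]
      omega
    have hne0 : ∀ v : V, v ≠ v₀ → e.symm v ≠ 0 := by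
      intro v hv hh
      exact hv (by rw [hv₀, ← hh, Equiv.apply_symm_apply])
    have hvalne : ∀ v : V, v ≠ v₀ → ((e.symm v : Fin (m + 1)) : ℕ) ≠ 0 := by
      intro v hv hh
      exact hne0 v hv (Fin.ext hh)
    have hmin : ∀ v, ¬ lt v v₀ := by
      intro v hv
      rw [hlt] at hv
      simp only [hv₀, Equiv.symm_apply_apply] at hv
      simp at hv
    have hmax' : ∀ v, v ≠ v₀ → lt' v v₀ := by
      intro v hv
      rw [hlt']
      simp only [hp', hv₀, Equiv.symm_apply_apply, hsymm0]
      have h1 := key (e.symm v) (hne0 v hv)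
      rw [h1, Fin.val_last]
      have h2 : ((e.symm v : Fin (m + 1)) : ℕ) ≤ m := Nat.lt_succ_iff.mp (e.symm v).isLt
      have h3 := hvalne v hv
      -- need (e.symm v : ℕ) - 1 < m ; since e.symm v ≠ 0 and ≤ m, v ≠ v₀
      omega
    have hagree : ∀ a b, a ≠ v₀ → b ≠ v₀ → (lt a b ↔ lt' a b) := by
      intro a b ha hb
      rw [hlt, hlt']
      simp only [hp']
      rw [key _ (hne0 a ha), key _ (hne0 b hb)]
      have h3 := hvalne a ha
      have h4 := hvalne b hb
      constructor <;> intro <;> omega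
    have htr : Transitive lt := fun _ _ _ h1 h2 => lt_trans h1 h2
    have htr' : Transitive lt' := fun _ _ _ h1 h2 => lt_trans h1 h2
    -- set equality
    have hset : {m' | ∃ l : List V, MonoCycle G lt l ∧ l.length = m'} =
        {m' | ∃ l : List V, MonoCycle G lt' l ∧ l.length = m'} := by
      ext k
      simp only [Set.mem_setOf_eq]
      constructor
      · rintro ⟨l, hl, rfl⟩
        obtain ⟨l', hl', hlen⟩ := monoCycle_transfer lt lt' htr htr' v₀ hmin hmax'
          (fun a b ha hb => (hagree a b ha hb).mp) hl
        exact ⟨l', hl', hlen⟩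
      · rintro ⟨l, hl, rfl⟩
        have h1 : MonoCycle G (flip lt') l.reverse := monoCycle_reverse hl
        have hmin2 : ∀ v, ¬ (flip lt') v v₀ := by
          intro v hv
          unfold flip at hv
          rw [hlt'] at hv
          simp only [hp', hv₀, Equiv.symm_apply_apply, hsymm0, Fin.val_last] at hv
          have h2 : ((((finRotate (m + 1)).symm (e.symm v)) : Fin (m + 1)) : ℕ) ≤ m :=
            Nat.lt_succ_iff.mp (Fin.isLt _)
          omega
        have hmax2 : ∀ v, v ≠ v₀ → (flip lt) v v₀ := by
          intro v hv
          unfold flip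
          rw [hlt]
          simp only [hv₀, Equiv.symm_apply_apply]
          have := hvalne v hv
          simp only [Fin.val_zero]
          omega
        have hagree2 : ∀ a b, a ≠ v₀ → b ≠ v₀ → (flip lt') a b → (flip lt) a b :=
          fun a b ha hb hab => (hagree b a hb ha).mpr hab
        obtain ⟨l', hl', hlen⟩ := monoCycle_transfer (flip lt') (flip lt)
          (fun _ _ _ h1 h2 => htr' h2 h1) (fun _ _ _ h1 h2 => htr h2 h1) v₀
          hmin2 hmax2 hagree2 h1
        have h2 : MonoCycle G (flip (flip lt)) l'.reverse := monoCycle_reverse hl'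
        refine ⟨l'.reverse, h2, by simpa using hlen⟩
    unfold maxCycleLen
    rw [hset]
end

section
/- Let H be a connected finite simple graph with a cut-vertex x, let H_1, ..., H_m be the components of H − x, and for each i let H'_i be the subgraph of H induced by V(H_i) ∪ {x}. Then α°(H) = max over i of α°(H'_i). -/
open SimpleGraph

namespace CutVertexAux

variable {V : Type*}

lemma monoCycle_singleton (G : SimpleGraph V) (lt : V → V → Prop) (v : V) :
    MonoCycle G lt [v] :=
  ⟨by simp, by simp, List.isChain_singleton v, fun h => by simp at h⟩

lemma lengthSet_nonempty (G : SimpleGraph V) (lt : V → V → Prop) [Nonempty V] :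
    {m | ∃ l : List V, MonoCycle G lt l ∧ l.length = m}.Nonempty :=
  ⟨1, [Classical.arbitrary V], monoCycle_singleton G lt _, rfl⟩

lemma lengthSet_bddAbove (G : SimpleGraph V) (lt : V → V → Prop) [Finite V] :
    BddAbove {m | ∃ l : List V, MonoCycle G lt l ∧ l.length = m} := by
  letI : Fintype V := Fintype.ofFinite V
  exact ⟨Fintype.card V, fun m ⟨l, hl, hm⟩ => hm ▸ hl.2.1.length_le_card⟩

lemma le_maxCycleLen (G : SimpleGraph V) (lt : V → V → Prop) [Finite V]
    {l : List V} (h : MonoCycle G lt l) : l.length ≤ maxCycleLen G lt :=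
  le_csSup (lengthSet_bddAbove G lt) ⟨l, h, rfl⟩

lemma maxCycleLen_le (G : SimpleGraph V) (lt : V → V → Prop) [Nonempty V]
    {n : ℕ} (h : ∀ l : List V, MonoCycle G lt l → l.length ≤ n) :
    maxCycleLen G lt ≤ n := by
  apply csSup_le (lengthSet_nonempty G lt)
  rintro m ⟨l, hl, rfl⟩
  exact h l hl

/-- Transfer of monotonic cycles between an induced subgraph and the whole graph. -/
lemma monoCycle_map_iff (H : SimpleGraph V) (S : Set V) (lt : V → V → Prop)
    (l' : List S) :
    MonoCycle (H.induce S) (fun a b => lt a.1 b.1) l' ↔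
      MonoCycle H lt (l'.map Subtype.val) := by
  unfold MonoCycle
  have hnodup : (l'.map Subtype.val).Nodup ↔ l'.Nodup :=
    List.nodup_map_iff Subtype.val_injective
  have hne : l'.map Subtype.val ≠ [] ↔ l' ≠ [] := not_congr List.map_eq_nil_iff
  have hlen : (l'.map Subtype.val).length = l'.length := List.length_map _
  have hch1 : (l'.map Subtype.val).Chain' lt ↔ l'.Chain' (fun a b => lt a.1 b.1) :=
    List.isChain_map _
  have hch2 : (l'.map Subtype.val).Chain' H.Adj ↔
      l'.Chain' (fun a b => H.Adj a.1 b.1) := List.isChain_map _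
  have hadj : ∀ a b : S, (H.induce S).Adj a b ↔ H.Adj a.1 b.1 := fun a b => Iff.rfl
  constructor
  · rintro ⟨h1, h2, h3, h4⟩
    refine ⟨hne.mpr h1, hnodup.mpr h2, hch1.mpr h3, fun hl => ?_⟩
    rw [hlen] at hl
    obtain ⟨h5, h6⟩ := h4 hl
    refine ⟨hch2.mpr h5, ?_⟩
    intro a b ha hb
    rw [List.head?_map] at ha
    rw [List.getLast?_map] at hb
    obtain ⟨a', ha', rfl⟩ := Option.map_eq_some_iff.mp ha
    obtain ⟨b', hb', rfl⟩ := Option.map_eq_some_iff.mp hb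
    exact h6 a' b' ha' hb'
  · rintro ⟨h1, h2, h3, h4⟩
    refine ⟨hne.mp h1, hnodup.mp h2, hch1.mp h3, fun hl => ?_⟩
    rw [← hlen] at hl
    obtain ⟨h5, h6⟩ := h4 hl
    refine ⟨hch2.mp h5, ?_⟩
    intro a b ha hb
    exact h6 a.1 b.1 (by rw [List.head?_map, ha]; rfl)
      (by rw [List.getLast?_map, hb]; rfl)

lemma chain'_of_short {α : Type*} {R : α → α → Prop} {l : List α}
    (h : l.length ≤ 1) : l.Chain' R := by
  match l with
  | [] => exact List.isChain_nil
  | [a] => exact List.isChain_singleton a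
  | a :: b :: t => simp at h

variable (H : SimpleGraph V) (x : V)

lemma head_reachable : ∀ (p : List V) (v : V), ((v :: p).Chain' H.Adj) →
    ∀ (hnx : ∀ u ∈ v :: p, u ≠ x) (a : V) (ha : a ∈ v :: p),
    (H.induce {y | y ≠ x}).Reachable ⟨v, hnx v (List.mem_cons_self)⟩ ⟨a, hnx a ha⟩
  | [], v, hp, hnx, a, ha => by
    have : a = v := by simpa using ha
    subst this
    exact Reachable.refl _
  | w :: q, v, hp, hnx, a, ha => by
    rcases List.mem_cons.mp ha with rfl | ha'
    · exact Reachable.refl _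
    · have hadj : H.Adj v w := (List.isChain_cons_cons.mp hp).1
      have hnx' : ∀ u ∈ w :: q, u ≠ x := fun u hu => hnx u (List.mem_cons_of_mem _ hu)
      have h1 : (H.induce {y | y ≠ x}).Adj ⟨v, hnx v (List.mem_cons_self)⟩
          ⟨w, hnx' w (List.mem_cons_self)⟩ := hadj
      exact h1.reachable.trans
        (head_reachable q w (List.isChain_cons_cons.mp hp).2 hnx' a ha')

lemma chain_reachable (p : List V) (hp : p.Chain' H.Adj)
    (hnx : ∀ u ∈ p, u ≠ x) (a b : V) (ha : a ∈ p) (hb : b ∈ p) :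
    (H.induce {y | y ≠ x}).Reachable ⟨a, hnx a ha⟩ ⟨b, hnx b hb⟩ := by
  match p with
  | [] => exact absurd ha (List.not_mem_nil)
  | v :: q =>
    exact (head_reachable H x q v hp hnx a ha).symm.trans
      (head_reachable H x q v hp hnx b hb)

/-- Every monotonic cycle is contained in one of the pieces. -/
lemma exists_component (hcc : Nonempty (H.induce {y | y ≠ x}).ConnectedComponent)
    {lt : V → V → Prop} {l : List V} (hl : MonoCycle H lt l) :
    ∃ c : (H.induce {y | y ≠ x}).ConnectedComponent,
      ∀ v ∈ l, v ∈ (Subtype.val '' c.supp) ∪ {x} := by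
  obtain ⟨hne, hnd, hch, hcyc⟩ := hl
  -- find a chain `p` avoiding `x` containing all non-`x` vertices of `l`
  obtain ⟨p, hpch, hpnx, hpmem⟩ :
      ∃ p : List V, p.Chain' H.Adj ∧ (∀ u ∈ p, u ≠ x) ∧
        (∀ v ∈ l, v ≠ x → v ∈ p) := by
    by_cases hx : x ∈ l
    · obtain ⟨l1, l2, rfl⟩ := List.append_of_mem hx
      have hx1 : x ∉ l1 := fun h =>
        (List.disjoint_of_nodup_append hnd) h (List.mem_cons_self)
      have hx2 : x ∉ l2 := by
        have := (List.nodup_append.mp hnd).2.1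
        exact (List.nodup_cons.mp this).1
      refine ⟨l2 ++ l1, ?_, ?_, ?_⟩
      · -- chain property
        by_cases hlen : 2 ≤ (l1 ++ x :: l2).length
        · obtain ⟨hadj, hclose⟩ := hcyc hlen
          have hc1 : l1.Chain' H.Adj := hadj.left_of_append
          have hc2 : l2.Chain' H.Adj := by
            have := (List.isChain_append.mp hadj).2.1
            exact this.tail
          refine List.isChain_append.mpr ⟨hc2, hc1, ?_⟩
          intro a ha b hb
          have hl2ne : l2 ≠ [] := by
            intro h; subst h; simp at ha
          have hl1ne : l1 ≠ [] := by
            intro h; subst h; simp at hb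
          have ha' : l2.getLast? = some a := Option.mem_def.mp ha
          have hb' : l1.head? = some b := Option.mem_def.mp hb
          have hxl2 : (x :: l2).getLast? = some a := by
            rw [List.getLast?_cons, ha']; rfl
          have hlast : (l1 ++ x :: l2).getLast? = some a := by
            rw [List.getLast?_append, hxl2]; rfl
          have hhead : (l1 ++ x :: l2).head? = some b := by
            rw [List.head?_append, hb']; rfl
          exact hclose b a hhead hlast
        · -- short list: l1 = l2 = []
          have : l1 = [] ∧ l2 = [] := by
            constructor <;> [skip; skip] <;>
            · by_contra h
              have := List.length_pos_iff.mpr h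
              simp [List.length_append] at hlen
              omega
          simp [this.1, this.2]; exact List.isChain_nil
      · intro u hu
        rcases List.mem_append.mp hu with h | h
        · exact fun he => hx2 (he ▸ h)
        · exact fun he => hx1 (he ▸ h)
      · intro v hv hvx
        rcases List.mem_append.mp hv with h | h
        · exact List.mem_append.mpr (Or.inr h)
        · rcases List.mem_cons.mp h with h' | h'
          · exact absurd h' hvx
          · exact List.mem_append.mpr (Or.inl h')
    · refine ⟨l, ?_, fun u hu he => hx (he ▸ hu), fun v hv _ => hv⟩
      by_cases hlen : 2 ≤ l.length
      · exact (hcyc hlen).1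
      · exact chain'_of_short (by omega)
  by_cases hp0 : p = []
  · refine ⟨hcc.some, fun v hv => ?_⟩
    by_cases hvx : v = x
    · exact Or.inr hvx
    · exact absurd (hp0 ▸ hpmem v hv hvx) (List.not_mem_nil)
  · set v₀ := p.head hp0 with hv₀
    have hv₀mem : v₀ ∈ p := List.head_mem hp0
    refine ⟨(H.induce {y | y ≠ x}).connectedComponentMk ⟨v₀, hpnx v₀ hv₀mem⟩,
      fun v hv => ?_⟩
    by_cases hvx : v = x
    · exact Or.inr hvx
    · have hvp : v ∈ p := hpmem v hv hvx
      refine Or.inl ⟨⟨v, hpnx v hvp⟩, ?_, rfl⟩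
      rw [SimpleGraph.ConnectedComponent.mem_supp_iff]
      exact ConnectedComponent.sound
        (chain_reachable H x p hpch hpnx v v₀ hvp hv₀mem)


lemma circAltSet_nonempty (G : SimpleGraph V) [Finite V] :
    {n | ∃ f : V → ℕ, Function.Injective f ∧
      maxCycleLen G (fun a b => f a < f b) = n}.Nonempty := by
  obtain ⟨f, hf⟩ := Countable.exists_injective_nat V
  exact ⟨_, f, hf, rfl⟩

lemma circAlt_mem (G : SimpleGraph V) [Finite V] :
    ∃ f : V → ℕ, Function.Injective f ∧
      maxCycleLen G (fun a b => f a < f b) = circAlt G :=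
  Nat.sInf_mem (circAltSet_nonempty G)

lemma exists_rank {W : Type*} [Finite V] [LinearOrder W] (key : V → W)
    (hinj : Function.Injective key) :
    ∃ f : V → ℕ, Function.Injective f ∧ ∀ u v, f u < f v ↔ key u < key v := by
  classical
  letI : Fintype V := Fintype.ofFinite V
  set f : V → ℕ := fun v => (Finset.univ.filter (fun u => key u < key v)).card with hf
  have hmono : ∀ u v, key u < key v → f u < f v := by
    intro u v h
    apply Finset.card_lt_card
    constructor
    · intro w hw
      simp only [Finset.mem_filter, Finset.mem_univ, true_and] at *
      exact lt_trans hw h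
    · intro hsub
      have := hsub (Finset.mem_filter.mpr ⟨Finset.mem_univ u, h⟩)
      simp only [Finset.mem_filter] at this
      exact lt_irrefl _ this.2
  have hiff : ∀ u v, f u < f v ↔ key u < key v := by
    intro u v
    refine ⟨fun h => ?_, hmono u v⟩
    by_contra hk
    push_neg at hk
    have hle : f v ≤ f u := Finset.card_le_card (fun w hw => by
      simp only [Finset.mem_filter, Finset.mem_univ, true_and] at *
      exact lt_of_lt_of_le hw hk)
    omega
  refine ⟨f, fun u v huv => ?_, hiff⟩
  by_contra hne
  rcases (hinj.ne hne).lt_or_gt with h | h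
  · exact absurd huv (Nat.ne_of_lt (hmono _ _ h))
  · exact absurd huv.symm (Nat.ne_of_lt (hmono _ _ h))

lemma circAlt_piece_le [Finite V] (H : SimpleGraph V) (x : V)
    (c : (H.induce {y | y ≠ x}).ConnectedComponent) :
    circAlt (H.induce ((Subtype.val '' c.supp) ∪ {x})) ≤ circAlt H := by
  obtain ⟨f, hfinj, hfmax⟩ := circAlt_mem H
  set S : Set V := (Subtype.val '' c.supp) ∪ {x} with hS
  haveI : Nonempty S := ⟨⟨x, Or.inr rfl⟩⟩
  have h1 : circAlt (H.induce S) ≤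
      maxCycleLen (H.induce S) (fun a b => f a.1 < f b.1) :=
    Nat.sInf_le ⟨fun a => f a.1, hfinj.comp Subtype.val_injective, rfl⟩
  refine h1.trans ?_
  rw [← hfmax]
  apply maxCycleLen_le
  intro l' hl'
  have hm := (monoCycle_map_iff H S (fun a b => f a < f b) l').mp hl'
  have hle := le_maxCycleLen H (fun a b => f a < f b) hm
  rwa [List.length_map] at hle

lemma circAlt_le_sup [Finite V] (H : SimpleGraph V) (hH : H.Connected) (x : V)
    (hcc : Nonempty (H.induce {y | y ≠ x}).ConnectedComponent) :
    circAlt H ≤ sSup {n | ∃ c : (H.induce {y | y ≠ x}).ConnectedComponent,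
      circAlt (H.induce ((Subtype.val '' c.supp) ∪ {x})) = n} := by
  classical
  haveI : Nonempty V := hH.nonempty
  haveI hCfin : Finite (H.induce {y | y ≠ x}).ConnectedComponent :=
    Quot.finite _
  have hbdd : BddAbove {n | ∃ c : (H.induce {y | y ≠ x}).ConnectedComponent,
      circAlt (H.induce ((Subtype.val '' c.supp) ∪ {x})) = n} :=
    (Set.finite_range fun c : (H.induce {y | y ≠ x}).ConnectedComponent =>
      circAlt (H.induce ((Subtype.val '' c.supp) ∪ {x}))).bddAbove
  have hg : ∀ c : (H.induce {y | y ≠ x}).ConnectedComponent,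
      ∃ g : ↥((Subtype.val '' c.supp) ∪ {x}) → ℕ, Function.Injective g ∧
        maxCycleLen (H.induce ((Subtype.val '' c.supp) ∪ {x}))
          (fun a b => g a < g b)
        = circAlt (H.induce ((Subtype.val '' c.supp) ∪ {x})) :=
    fun c => circAlt_mem _
  choose g hginj hgmax using hg
  obtain ⟨e, he⟩ := Countable.exists_injective_nat
    (H.induce {y | y ≠ x}).ConnectedComponent
  have hmem : ∀ (v : V) (h : v ≠ x),
      v ∈ (Subtype.val ''
        ((H.induce {y | y ≠ x}).connectedComponentMk ⟨v, h⟩).supp) ∪ {x} :=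
    fun v h => Or.inl ⟨⟨v, h⟩, rfl, rfl⟩
  set key : V → Lex (ℕ × Lex (ℕ × ℕ)) := fun v =>
    if h : v = x then toLex (1, toLex (0, 0))
    else
      toLex (if g ((H.induce {y | y ≠ x}).connectedComponentMk ⟨v, h⟩)
            ⟨x, Or.inr rfl⟩ <
          g ((H.induce {y | y ≠ x}).connectedComponentMk ⟨v, h⟩)
            ⟨v, hmem v h⟩ then 2 else 0,
        toLex (e ((H.induce {y | y ≠ x}).connectedComponentMk ⟨v, h⟩),
          g ((H.induce {y | y ≠ x}).connectedComponentMk ⟨v, h⟩)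
            ⟨v, hmem v h⟩)) with hkeydef
  have key_x : key x = toLex (1, toLex (0, 0)) := by
    simp [hkeydef]
  have key_spec : ∀ (v : V) (h : v ≠ x) (c : (H.induce {y | y ≠ x}).ConnectedComponent)
      (hc : (H.induce {y | y ≠ x}).connectedComponentMk ⟨v, h⟩ = c)
      (hm : v ∈ (Subtype.val '' c.supp) ∪ {x}),
      key v = toLex (if g c ⟨x, Or.inr rfl⟩ < g c ⟨v, hm⟩ then 2 else 0,
        toLex (e c, g c ⟨v, hm⟩)) := by
    intro v h c hc hm
    subst hc
    simp only [hkeydef]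
    rw [dif_neg h]
  have hcompeq : ∀ (c : (H.induce {y | y ≠ x}).ConnectedComponent)
      (a : ↥((Subtype.val '' c.supp) ∪ {x})) (h : a.1 ≠ x),
      (H.induce {y | y ≠ x}).connectedComponentMk ⟨a.1, h⟩ = c := by
    intro c a h
    rcases a.2 with ⟨w, hw, hwv⟩ | hxx
    · have hww : (⟨a.1, h⟩ : ↥{y | y ≠ x}) = w := Subtype.ext hwv.symm
      rw [hww]
      exact (SimpleGraph.ConnectedComponent.mem_supp_iff _ _).mp hw
    · exact absurd hxx h
  have key_spec' : ∀ (c : (H.induce {y | y ≠ x}).ConnectedComponent)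
      (a : ↥((Subtype.val '' c.supp) ∪ {x})) (h : a.1 ≠ x),
      key a.1 = toLex (if g c ⟨x, Or.inr rfl⟩ < g c a then 2 else 0,
        toLex (e c, g c a)) :=
    fun c a h => key_spec a.1 h c (hcompeq c a h) a.2
  -- injectivity of key
  have hkeyinj : Function.Injective key := by
    intro u v huv
    by_cases hu : u = x <;> by_cases hv : v = x
    · rw [hu, hv]
    · exfalso
      subst hu
      have hkv := key_spec v hv _ rfl (hmem v hv)
      have huv' := (key_x.symm.trans huv).trans hkv
      have h1 := congrArg (fun p => (ofLex p).1) huv'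
      simp only [ofLex_toLex] at h1
      split at h1 <;> omega
    · exfalso
      subst hv
      have hku := key_spec u hu _ rfl (hmem u hu)
      have huv' := (hku.symm.trans huv).trans key_x
      have h1 := congrArg (fun p => (ofLex p).1) huv'
      simp only [ofLex_toLex] at h1
      split at h1 <;> omega
    · have hku := key_spec u hu _ rfl (hmem u hu)
      have hkv := key_spec v hv _ rfl (hmem v hv)
      have huv1 := (hku.symm.trans huv).trans hkv
      have h2 := congrArg (fun p => (ofLex (ofLex p).2)) huv1
      simp only [ofLex_toLex] at h2
      have hee : e ((H.induce {y | y ≠ x}).connectedComponentMk ⟨u, hu⟩)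
          = e ((H.induce {y | y ≠ x}).connectedComponentMk ⟨v, hv⟩) :=
        congrArg Prod.fst h2
      have hcc2 : (H.induce {y | y ≠ x}).connectedComponentMk ⟨u, hu⟩
          = (H.induce {y | y ≠ x}).connectedComponentMk ⟨v, hv⟩ := he hee
      have hmv : v ∈ (Subtype.val ''
          ((H.induce {y | y ≠ x}).connectedComponentMk ⟨u, hu⟩).supp) ∪ {x} :=
        Or.inl ⟨⟨v, hv⟩,
          (SimpleGraph.ConnectedComponent.mem_supp_iff _ _).mpr hcc2.symm, rfl⟩
      have hkv2 := key_spec v hv _ hcc2.symm hmv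
      have huv2 := (hku.symm.trans huv).trans hkv2
      have h3 := congrArg (fun p => ((ofLex (ofLex p).2)).2) huv2
      simp only [ofLex_toLex] at h3
      exact congrArg Subtype.val (hginj _ h3)
  -- order characterisation
  have korder : ∀ (c : (H.induce {y | y ≠ x}).ConnectedComponent)
      (a b : ↥((Subtype.val '' c.supp) ∪ {x})),
      (key a.1 < key b.1) ↔ g c a < g c b := by
    intro c a b
    by_cases ha : a.1 = x <;> by_cases hb : b.1 = x
    · have hab : a = b := Subtype.ext (ha.trans hb.symm)
      rw [hab]
      simp [lt_irrefl]
    · have hax : a = ⟨x, Or.inr rfl⟩ := Subtype.ext ha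
      rw [ha, key_x, key_spec' c b hb, Prod.Lex.lt_iff, hax]
      by_cases h2 : g c ⟨x, Or.inr rfl⟩ < g c b <;>
        simp [h2, Prod.Lex.lt_iff] <;> omega
    · have hbx : b = ⟨x, Or.inr rfl⟩ := Subtype.ext hb
      have hne : g c a ≠ g c ⟨x, Or.inr rfl⟩ := fun hgg =>
        ha (congrArg Subtype.val (hginj c hgg))
      rw [hb, key_x, key_spec' c a ha, Prod.Lex.lt_iff, hbx]
      by_cases h1 : g c ⟨x, Or.inr rfl⟩ < g c a <;>
        simp [h1, Prod.Lex.lt_iff] <;> omega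
    · rw [key_spec' c a ha, key_spec' c b hb, Prod.Lex.lt_iff]
      have hane : g c a ≠ g c ⟨x, Or.inr rfl⟩ := fun hgg =>
        ha (congrArg Subtype.val (hginj c hgg))
      have hbne : g c b ≠ g c ⟨x, Or.inr rfl⟩ := fun hgg =>
        hb (congrArg Subtype.val (hginj c hgg))
      by_cases h1 : g c ⟨x, Or.inr rfl⟩ < g c a <;>
        by_cases h2 : g c ⟨x, Or.inr rfl⟩ < g c b <;>
        simp [h1, h2, Prod.Lex.lt_iff] <;> omega
  obtain ⟨f, hfinj, hfiff⟩ := exists_rank key hkeyinj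
  refine le_trans (Nat.sInf_le ⟨f, hfinj, rfl⟩) ?_
  apply maxCycleLen_le
  intro l hl
  obtain ⟨c, hc⟩ := exists_component H x hcc hl
  set S : Set V := (Subtype.val '' c.supp) ∪ {x} with hS
  set l' : List ↥S := l.pmap (fun v h => ⟨v, h⟩) hc with hl'def
  have hmap : l'.map Subtype.val = l := by
    rw [hl'def, List.map_pmap]
    exact (List.pmap_eq_map _).trans (List.map_id l)
  have hl'' : MonoCycle (H.induce S) (fun a b => f a.1 < f b.1) l' :=
    (monoCycle_map_iff H S (fun a b => f a < f b) l').mpr (by rw [hmap]; exact hl)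
  have hrel : (fun a b : ↥S => f a.1 < f b.1) = fun a b => g c a < g c b := by
    funext a b
    exact propext ((hfiff a.1 b.1).trans (korder c a b))
  rw [hrel] at hl''
  calc l.length = l'.length := by rw [← hmap, List.length_map]
    _ ≤ maxCycleLen (H.induce S) (fun a b => g c a < g c b) :=
        le_maxCycleLen _ _ hl''
    _ = circAlt (H.induce S) := hgmax c
    _ ≤ _ := le_csSup hbdd ⟨c, rfl⟩

end CutVertexAux

/-- Let `H` be a connected graph with a cut-vertex `x` (i.e. `H - x` has at least
two components).  For each component `c` of `H - x`, let `H'_c` be the subgraph of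
`H` induced by the vertices of `c` together with `x`.  Then the circular altitude
of `H` is the maximum of the circular altitudes of the `H'_c`. -/
theorem circAlt_eq_sup_cutVertex_pieces {V : Type*} [Finite V]
    (H : SimpleGraph V) (hH : H.Connected) (x : V)
    (hcut : ∃ c₁ c₂ : (H.induce {y | y ≠ x}).ConnectedComponent, c₁ ≠ c₂) :
    circAlt H = sSup {n | ∃ c : (H.induce {y | y ≠ x}).ConnectedComponent,
      circAlt (H.induce ((Subtype.val '' c.supp) ∪ {x})) = n} := by
  obtain ⟨c₀, c₂, hne⟩ := hcut
  apply le_antisymm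
  · exact CutVertexAux.circAlt_le_sup H hH x ⟨c₀⟩
  · refine csSup_le ⟨_, ⟨c₀, rfl⟩⟩ ?_
    rintro n ⟨c, rfl⟩
    exact CutVertexAux.circAlt_piece_le H x c
end

section
/- The circular altitude of a finite simple graph equals the maximum of the circular altitudes of its blocks. -/
open SimpleGraph

/-- `x` is a cut-vertex of `G`: deleting `x` increases the number of connected
components, i.e. some two vertices distinct from `x` are reachable in `G` but
not in `G - x`. -/
def IsCutVertex {V : Type*} (G : SimpleGraph V) (x : V) : Prop :=
  ∃ a b : ({y | y ≠ x} : Set V), G.Reachable a.1 b.1 ∧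
    ¬ (G.induce {y | y ≠ x}).Reachable a b

/-- A graph is nonseparable if it is connected and has no cut-vertex. -/
def Nonseparable {V : Type*} (G : SimpleGraph V) : Prop :=
  G.Connected ∧ ∀ x : V, ¬ IsCutVertex G x

/-- A block of `G` is a maximal nonseparable subgraph of `G`. -/
def IsBlock {V : Type*} {G : SimpleGraph V} (B : G.Subgraph) : Prop :=
  Nonseparable B.coe ∧ ∀ B' : G.Subgraph, B ≤ B' → Nonseparable B'.coe → B = B'

section Basic
variable {V W : Type*} {G : SimpleGraph V} {A : SimpleGraph W} {lt lt' : V → V → Prop}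

theorem monoCycle_congr (h : ∀ a b, lt a b ↔ lt' a b) {l : List V} :
    MonoCycle G lt l → MonoCycle G lt' l := by
  rintro ⟨h1, h2, h3, h4⟩
  exact ⟨h1, h2, h3.imp fun a b => (h a b).1, h4⟩

theorem maxCycleLen_congr (h : ∀ a b, lt a b ↔ lt' a b) :
    maxCycleLen G lt = maxCycleLen G lt' := by
  unfold maxCycleLen
  congr 1
  ext m
  constructor
  · rintro ⟨l, hl, rfl⟩; exact ⟨l, monoCycle_congr h hl, rfl⟩
  · rintro ⟨l, hl, rfl⟩; exact ⟨l, monoCycle_congr (fun a b => (h a b).symm) hl, rfl⟩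

theorem monoCycle_singleton (v : V) : MonoCycle G lt [v] := by
  refine ⟨by simp, by simp, List.isChain_singleton _, ?_⟩
  intro h; simp at h

theorem cycleSet_bddAbove [Finite V] :
    BddAbove {m | ∃ l : List V, MonoCycle G lt l ∧ l.length = m} := by
  have := Fintype.ofFinite V
  refine ⟨Fintype.card V, ?_⟩
  rintro m ⟨l, hl, rfl⟩
  exact hl.2.1.length_le_card

theorem le_maxCycleLen [Finite V] {l : List V} (hl : MonoCycle G lt l) :
    l.length ≤ maxCycleLen G lt :=
  le_csSup cycleSet_bddAbove ⟨l, hl, rfl⟩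

theorem one_le_maxCycleLen [Finite V] [Nonempty V] : 1 ≤ maxCycleLen G lt :=
  le_maxCycleLen (monoCycle_singleton (Classical.arbitrary V))

theorem exists_maxCycleLen [Finite V] [Nonempty V] :
    ∃ l : List V, MonoCycle G lt l ∧ l.length = maxCycleLen G lt := by
  refine Nat.sSup_mem ?_ cycleSet_bddAbove
  exact ⟨1, [Classical.arbitrary V], monoCycle_singleton _, rfl⟩

theorem circAlt_le [Finite V] {f : V → ℕ} (hf : Function.Injective f) :
    circAlt G ≤ maxCycleLen G (fun a b => f a < f b) :=
  Nat.sInf_le ⟨f, hf, rfl⟩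

theorem exists_circAlt_spec [Finite V] (G : SimpleGraph V) :
    ∃ f : V → ℕ, Function.Injective f ∧
      maxCycleLen G (fun a b => f a < f b) = circAlt G := by
  obtain ⟨f, hf⟩ := Countable.exists_injective_nat V
  have : circAlt G ∈ {n | ∃ f : V → ℕ, Function.Injective f ∧
      maxCycleLen G (fun a b => f a < f b) = n} := by
    refine Nat.sInf_mem ?_
    exact ⟨maxCycleLen G (fun a b => f a < f b), f, hf, rfl⟩
  exact this

theorem one_le_circAlt [Finite V] [Nonempty V] : 1 ≤ circAlt G := by
  obtain ⟨f, hf, heq⟩ := exists_circAlt_spec G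
  exact heq ▸ one_le_maxCycleLen

theorem monoCycle_map {φ : W → V} (hinj : Function.Injective φ)
    (hadj : ∀ a b, A.Adj a b → G.Adj (φ a) (φ b)) {ltA : W → W → Prop}
    (hlt : ∀ a b, ltA a b → lt (φ a) (φ b)) {l : List W} (hl : MonoCycle A ltA l) :
    MonoCycle G lt (l.map φ) := by
  obtain ⟨h1, h2, h3, h4⟩ := hl
  refine ⟨by simpa using h1, h2.map hinj, (List.isChain_map φ).2 (h3.imp hlt), ?_⟩
  intro hlen
  rw [List.length_map] at hlen
  obtain ⟨h5, h6⟩ := h4 hlen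
  refine ⟨(List.isChain_map φ).2 (h5.imp hadj), ?_⟩
  intro a b ha hb
  rw [List.head?_map] at ha
  rw [List.getLast?_map] at hb
  obtain ⟨a', ha', rfl⟩ := Option.map_eq_some_iff.1 ha
  obtain ⟨b', hb', rfl⟩ := Option.map_eq_some_iff.1 hb
  exact hadj _ _ (h6 a' b' ha' hb')

theorem circAlt_le_of_hom_s8 [Finite V] [Finite W] {φ : W → V} (hinj : Function.Injective φ)
    (hadj : ∀ a b, A.Adj a b → G.Adj (φ a) (φ b)) : circAlt A ≤ circAlt G := by
  obtain ⟨f, hf, heq⟩ := exists_circAlt_spec G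
  calc circAlt A ≤ maxCycleLen A (fun a b => (f ∘ φ) a < (f ∘ φ) b) :=
        circAlt_le (hf.comp hinj)
    _ ≤ maxCycleLen G (fun a b => f a < f b) := by
        refine csSup_le' ?_
        rintro m ⟨l, hl, rfl⟩
        have := monoCycle_map (lt := fun a b => f a < f b) hinj hadj
          (ltA := fun a b => (f ∘ φ) a < (f ∘ φ) b) (fun a b h => h) hl
        simpa using le_maxCycleLen this
    _ = circAlt G := heq

theorem circAlt_eq_of_equiv [Finite V] [Finite W] (e : W ≃ V)
    (h : ∀ a b, A.Adj a b ↔ G.Adj (e a) (e b)) : circAlt A = circAlt G := by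
  refine le_antisymm (circAlt_le_of_hom_s8 e.injective fun a b => (h a b).1) ?_
  refine circAlt_le_of_hom_s8 e.symm.injective fun a b hab => ?_
  rw [h]
  simpa using hab

end Basic

section Chains
variable {V : Type*} {H : SimpleGraph V} {R : V → V → Prop} {s : Set V}

theorem reachable_of_chain'_head {l : List V} (hc : l.Chain' H.Adj) {c : V}
    (hhd : l.head? = some c) {a : V} (ha : a ∈ l) : H.Reachable c a := by
  induction l generalizing c with
  | nil => simp at ha
  | cons d t ih =>
    obtain rfl : d = c := by simpa using hhd
    rcases List.mem_cons.1 ha with rfl | ha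
    · exact SimpleGraph.Reachable.refl _
    · cases t with
      | nil => simp at ha
      | cons e t' =>
        have hadj : H.Adj d e := (List.isChain_cons_cons.1 hc).1
        exact (hadj.reachable).trans (ih (List.isChain_cons_cons.1 hc).2 rfl ha)

theorem reachable_of_chain' {l : List V} (hc : l.Chain' H.Adj) {a b : V}
    (ha : a ∈ l) (hb : b ∈ l) : H.Reachable a b := by
  cases l with
  | nil => simp at ha
  | cons d t =>
    exact (reachable_of_chain'_head hc rfl ha).symm.trans (reachable_of_chain'_head hc rfl hb)

theorem chain'_all_or_none {l : List V} (hc : l.Chain' R)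
    (h : ∀ a b, R a b → (a ∈ s ↔ b ∈ s)) :
    (∀ a ∈ l, a ∈ s) ∨ (∀ a ∈ l, a ∉ s) := by
  induction l with
  | nil => left; simp
  | cons d t ih =>
    rcases t with _ | ⟨e, t'⟩
    · by_cases hd : d ∈ s
      · left; simpa using hd
      · right; simpa using hd
    · have hR : R d e := (List.isChain_cons_cons.1 hc).1
      have hiff := h _ _ hR
      rcases ih (List.isChain_cons_cons.1 hc).2 with hall | hnone
      · left
        intro a haa
        rcases List.mem_cons.1 haa with rfl | haa
        · exact hiff.2 (hall e (by simp))
        · exact hall a haa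
      · right
        intro a haa
        rcases List.mem_cons.1 haa with rfl | haa
        · exact fun hds => hnone e (by simp) (hiff.1 hds)
        · exact hnone a haa

theorem chain'_rotate {l l1 l2 : List V} {x : V} (hc : l.Chain' H.Adj)
    (hwrap : ∀ a b, l.head? = some a → l.getLast? = some b → H.Adj b a)
    (hl : l = l1 ++ x :: l2) : (l2 ++ l1).Chain' H.Adj := by
  subst hl
  have h := List.isChain_append.1 hc
  refine List.isChain_append.2 ⟨h.2.1.tail, h.1, ?_⟩
  intro a ha b hb
  have hl2 : l2 ≠ [] := by rintro rfl; simp at ha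
  have hl1 : l1 ≠ [] := by rintro rfl; simp at hb
  have hhd : (l1 ++ x :: l2).head? = some b := by
    rw [List.head?_append_of_ne_nil _ hl1]; exact hb
  have hlast : (l1 ++ x :: l2).getLast? = some a := by
    rw [List.getLast?_append_cons]
    rw [show x :: l2 = [x] ++ l2 from rfl, List.getLast?_append_of_ne_nil _ hl2]
    exact ha
  exact hwrap b a hhd hlast
theorem chain'_and_of_forall {p : V → Prop} :
    ∀ {l : List V}, l.Chain' R → (∀ a ∈ l, p a) →
      l.Chain' (fun a b => R a b ∧ p a ∧ p b) := by
  intro l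
  induction l with
  | nil => intro _ _; exact List.isChain_nil
  | cons d t ih =>
    intro hc hp
    cases t with
    | nil => exact List.isChain_singleton _
    | cons e t' =>
      simp only [List.Chain', List.isChain_cons_cons] at hc ⊢
      exact ⟨⟨hc.1, hp d (by simp), hp e (by simp)⟩,
        ih hc.2 (fun a ha => hp a (List.mem_cons_of_mem d ha))⟩

end Chains

section Transfer
variable {V W : Type*}

theorem nonseparable_of_equiv (A : SimpleGraph W) (G : SimpleGraph V) (e : W ≃ V)
    (h : ∀ a b, A.Adj a b ↔ G.Adj (e a) (e b)) (hA : Nonseparable A) : Nonseparable G := by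
  let homAG : A →g G := ⟨e, fun hab => (h _ _).1 hab⟩
  constructor
  · have hne : Nonempty W := hA.1.nonempty
    rw [SimpleGraph.connected_iff]
    refine ⟨fun u v => ?_, ⟨e (Classical.arbitrary W)⟩⟩
    have hfun : ∀ w, homAG w = e w := fun _ => rfl
    have := (hA.1.preconnected (e.symm u) (e.symm v)).map homAG
    simpa [hfun] using this
  · rintro x ⟨a, b, hr, hnr⟩
    have ha' : e.symm a.1 ≠ e.symm x := fun hh => a.2 (by simpa using congrArg e hh)
    have hb' : e.symm b.1 ≠ e.symm x := fun hh => b.2 (by simpa using congrArg e hh)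
    refine hA.2 (e.symm x) ⟨⟨e.symm a.1, ha'⟩, ⟨e.symm b.1, hb'⟩, ?_, ?_⟩
    · let homGA : G →g A := ⟨e.symm, fun {u v} huv => (h _ _).2 (by simpa using huv)⟩
      have hfun : ∀ w, homGA w = e.symm w := fun _ => rfl
      simpa [hfun] using hr.map homGA
    · intro hreach
      apply hnr
      let hom : (A.induce {y | y ≠ e.symm x}) →g (G.induce {y | y ≠ x}) :=
        ⟨fun p => ⟨e p.1, fun hh => p.2 (by simp [← hh])⟩, by
          rintro ⟨u, hu⟩ ⟨v, hv⟩ huv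
          simp only [SimpleGraph.comap_adj, Function.Embedding.coe_subtype] at huv ⊢
          exact (h _ _).1 huv⟩
      have key := hreach.map hom
      have hfun : ∀ p, (hom p : V) = e p.1 := fun _ => rfl
      have ha : hom ⟨e.symm a.1, ha'⟩ = a := Subtype.ext (by rw [hfun]; exact e.apply_symm_apply a.1)
      have hb : hom ⟨e.symm b.1, hb'⟩ = b := Subtype.ext (by rw [hfun]; exact e.apply_symm_apply b.1)
      rwa [ha, hb] at key

theorem nonseparable_singletonSubgraph (G : SimpleGraph V) (v : V) :
    Nonseparable (G.singletonSubgraph v).coe := by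
  constructor
  · exact (SimpleGraph.Subgraph.singletonSubgraph_connected (v := v)).coe
  · rintro x ⟨a, b, hr, hnr⟩
    have hx : (x : V) = v := x.2
    have ha : (a.1 : V) = v := a.1.2
    exact a.2 (Subtype.ext (ha.trans hx.symm))

instance subgraphFinite [Finite V] (G : SimpleGraph V) : Finite G.Subgraph := by
  have : Finite Prop := inferInstance
  refine Finite.of_injective (fun B => (B.verts, B.Adj)) ?_
  intro B1 B2 hB
  obtain ⟨h1, h2⟩ := Prod.mk.injEq .. ▸ hB
  exact SimpleGraph.Subgraph.ext h1 h2

theorem exists_isBlock_ge [Finite V] {G : SimpleGraph V} {B : G.Subgraph}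
    (hB : Nonseparable B.coe) : ∃ B', B ≤ B' ∧ IsBlock B' := by
  obtain ⟨C, hC, hmax⟩ := Set.Finite.exists_maximalFor id
    {C : G.Subgraph | B ≤ C ∧ Nonseparable C.coe} (Set.toFinite _) ⟨B, le_rfl, hB⟩
  exact ⟨C, hC.1, hC.2, fun B' hle hns => le_antisymm hle (hmax ⟨hC.1.trans hle, hns⟩ hle)⟩

theorem transport_subgraph [Finite V] (G : SimpleGraph V) (s : Set V)
    (B1 : (G.induce s).Subgraph) (h1 : Nonseparable B1.coe) {n : ℕ}
    (h2 : n ≤ circAlt B1.coe) :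
    ∃ B : G.Subgraph, Nonseparable B.coe ∧ n ≤ circAlt B.coe := by
  let B : G.Subgraph :=
    { verts := Subtype.val '' B1.verts
      Adj := fun x y => ∃ (hx : x ∈ s) (hy : y ∈ s), B1.Adj ⟨x, hx⟩ ⟨y, hy⟩
      adj_sub := by rintro x y ⟨hx, hy, hadj⟩; simpa using B1.adj_sub hadj
      edge_vert := by rintro x y ⟨hx, hy, hadj⟩; exact ⟨⟨x, hx⟩, B1.edge_vert hadj, rfl⟩
      symm := ⟨by rintro x y ⟨hx, hy, hadj⟩; exact ⟨hy, hx, hadj.symm⟩⟩ }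
  let e : ↥B1.verts ≃ ↥B.verts := Equiv.Set.image Subtype.val B1.verts Subtype.val_injective
  have hval : ∀ a : ↥B1.verts, ((e a : ↥B.verts) : V) = ((a : ↥s) : V) := by
    intro a; simp [e, B]
  have hadj : ∀ a b : ↥B1.verts, B1.coe.Adj a b ↔ B.coe.Adj (e a) (e b) := by
    intro a b
    rw [SimpleGraph.Subgraph.coe_adj, SimpleGraph.Subgraph.coe_adj, hval a, hval b]
    show B1.Adj a.1 b.1 ↔ ∃ hx hy, B1.Adj ⟨((a : ↥s) : V), hx⟩ ⟨((b : ↥s) : V), hy⟩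
    constructor
    · intro hab; exact ⟨a.1.2, b.1.2, hab⟩
    · rintro ⟨hx, hy, hab⟩; exact hab
  refine ⟨B, nonseparable_of_equiv _ _ e hadj h1, ?_⟩
  have heq : circAlt B1.coe = circAlt B.coe := circAlt_eq_of_equiv e hadj
  exact heq ▸ h2

end Transfer

section Squash

noncomputable def gsq (q : ℚ) : ℚ := q / (1 + |q|)

theorem gsq_bound (q : ℚ) : -1 < gsq q ∧ gsq q < 1 := by
  have h : (0 : ℚ) < 1 + |q| := by positivity
  constructor
  · rw [gsq, lt_div_iff₀ h]
    nlinarith [neg_abs_le q, abs_nonneg q]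
  · rw [gsq, div_lt_one h]
    nlinarith [le_abs_self q, abs_nonneg q]

theorem gsq_mono : StrictMono gsq := by
  intro q r hqr
  have hq : (0:ℚ) < 1 + |q| := by positivity
  have hr : (0:ℚ) < 1 + |r| := by positivity
  rw [gsq, gsq, div_lt_div_iff₀ hq hr]
  rcases abs_cases q with ⟨hq1, hq2⟩ | ⟨hq1, hq2⟩ <;>
    rcases abs_cases r with ⟨hr1, hr2⟩ | ⟨hr1, hr2⟩ <;>
      rw [hq1, hr1] <;> nlinarith

theorem stepMono (c lo mid hi : ℚ) (h1 : lo + 1 ≤ mid) (h2 : mid + 1 ≤ hi) :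
    StrictMono (fun q => if q < c then lo + gsq q else if q = c then mid else hi + gsq q) := by
  intro q r hqr
  have hbq := gsq_bound q
  have hbr := gsq_bound r
  have hm := gsq_mono hqr
  simp only []
  split_ifs <;> linarith

end Squash

section Lift
variable {V : Type*} {G : SimpleGraph V}

theorem monoCycle_lift (s : Set V) {ltV : V → V → Prop} {lts : ↥s → ↥s → Prop}
    (hagree : ∀ u v : ↥s, lts u v ↔ ltV u.1 v.1)
    {l : List V} (hsub : ∀ a ∈ l, a ∈ s) (hl : MonoCycle G ltV l) :
    ∃ l' : List ↥s, MonoCycle (G.induce s) lts l' ∧ l'.length = l.length := by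
  refine ⟨l.attach.map (fun p => ⟨p.1, hsub p.1 p.2⟩), ?_, by simp⟩
  have hmap : (l.attach.map (fun p => (⟨p.1, hsub p.1 p.2⟩ : ↥s))).map Subtype.val = l := by
    simp
  obtain ⟨h1, h2, h3, h4⟩ := hl
  refine ⟨?_, ?_, ?_, ?_⟩
  · intro hnil
    apply h1
    rw [← hmap, hnil]
    rfl
  · apply List.Nodup.of_map Subtype.val
    rw [hmap]; exact h2
  · have h3' := h3
    rw [← hmap] at h3'
    exact ((List.isChain_map _).1 h3').imp (fun a b hab => (hagree _ _).2 hab)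
  · intro hlen
    have hlen' : 2 ≤ l.length := by
      rw [← hmap, List.length_map]; exact hlen
    obtain ⟨h5, h6⟩ := h4 hlen'
    constructor
    · have h5' := h5
      rw [← hmap] at h5'
      refine ((List.isChain_map _).1 h5').imp (fun a b hab => ?_)
      simpa using hab
    · intro a b ha hb
      have ha' : l.head? = some a.1 := by
        rw [← hmap, List.head?_map, ha]; rfl
      have hb' : l.getLast? = some b.1 := by
        rw [← hmap, List.getLast?_map, hb]; rfl
      have := h6 _ _ ha' hb'
      simpa using this

end Lift

section Key
universe u

theorem key_lemma : ∀ (n : ℕ) (V : Type u) [Finite V] [Nonempty V], Nat.card V = n →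
    ∀ G : SimpleGraph V,
    ∃ f : V → ℚ, Function.Injective f ∧
      ∀ l : List V, MonoCycle G (fun a b => f a < f b) l → 2 ≤ l.length →
        ∃ B : G.Subgraph, Nonseparable B.coe ∧ l.length ≤ circAlt B.coe := by
  intro n
  induction n using Nat.strong_induction_on with
  | _ n IH =>
  intro V _ _ hcard G
  classical
  have hVfin := Fintype.ofFinite V
  by_cases hG : Nonseparable G
  · -- Case (i): G itself nonseparable, take ⊤
    obtain ⟨f0, hf0, heq⟩ := exists_circAlt_spec G
    refine ⟨fun v => (f0 v : ℚ), fun a b hab => hf0 (Nat.cast_injective hab), ?_⟩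
    intro l hl hlen
    have hl' : MonoCycle G (fun a b => f0 a < f0 b) l :=
      monoCycle_congr (fun a b => by exact Nat.cast_lt) hl
    have hiso := (SimpleGraph.Subgraph.topIso (G := G)).symm
    have hadj : ∀ a b : V, G.Adj a b ↔ (⊤ : G.Subgraph).coe.Adj (hiso a) (hiso b) :=
      fun a b => (hiso.map_adj_iff).symm
    refine ⟨⊤, nonseparable_of_equiv G _ hiso.toEquiv hadj hG, ?_⟩
    have h2 : circAlt G = circAlt (⊤ : G.Subgraph).coe :=
      circAlt_eq_of_equiv (A := G) hiso.toEquiv hadj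
    rw [← h2, ← heq]
    exact le_maxCycleLen hl'
  · by_cases hconn : G.Connected
    · -- Case (iii): connected with a cut vertex
      have hcut : ∃ x, IsCutVertex G x := by
        by_contra hc
        push_neg at hc
        exact hG ⟨hconn, hc⟩
      obtain ⟨x, a, b, hr, hnr⟩ := hcut
      set Gx := G.induce {y | y ≠ x} with hGx
      set C1 : Set V := {v | ∃ h : v ≠ x, Gx.Reachable a ⟨v, h⟩} with hC1
      have hxC1 : x ∉ C1 := by rintro ⟨h, -⟩; exact h rfl
      have haC1 : a.1 ∈ C1 := ⟨a.2, by exact SimpleGraph.Reachable.refl _⟩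
      have hbC1 : b.1 ∉ C1 := by
        rintro ⟨h, hre⟩
        exact hnr (by exact hre)
      set s1 : Set V := C1 ∪ {x} with hs1
      set s2 : Set V := C1ᶜ with hs2
      have hxs1 : x ∈ s1 := Or.inr rfl
      have hxs2 : x ∈ s2 := hxC1
      have hbs1 : b.1 ∉ s1 := by
        rintro (h | h)
        · exact hbC1 h
        · exact b.2 h
      have has2 : a.1 ∉ s2 := fun h => h haC1
      have hcard1 : Nat.card ↥s1 < n := by
        rw [← hcard, Nat.card_coe_set_eq, ← Set.ncard_univ]
        refine Set.ncard_lt_ncard ?_ Set.finite_univ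
        exact Set.ssubset_univ_iff.mpr (fun h => hbs1 (h ▸ Set.mem_univ b.1))
      have hcard2 : Nat.card ↥s2 < n := by
        rw [← hcard, Nat.card_coe_set_eq, ← Set.ncard_univ]
        refine Set.ncard_lt_ncard ?_ Set.finite_univ
        exact Set.ssubset_univ_iff.mpr (fun h => has2 (h ▸ Set.mem_univ a.1))
      have hne1 : Nonempty ↥s1 := ⟨⟨x, hxs1⟩⟩
      have hne2 : Nonempty ↥s2 := ⟨⟨x, hxs2⟩⟩
      obtain ⟨f1, hf1, H1⟩ := IH _ hcard1 ↥s1 rfl (G.induce s1)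
      obtain ⟨f2, hf2, H2⟩ := IH _ hcard2 ↥s2 rfl (G.induce s2)
      set c1 := f1 ⟨x, hxs1⟩ with hc1def
      set c2 := f2 ⟨x, hxs2⟩ with hc2def
      set F1 : ℚ → ℚ := fun q => if q < c1 then 0 + gsq q else if q = c1 then 10 else 20 + gsq q
        with hF1def
      set F2 : ℚ → ℚ := fun q => if q < c2 then 5 + gsq q else if q = c2 then 10 else 15 + gsq q
        with hF2def
      have hF1mono : StrictMono F1 := stepMono c1 0 10 20 (by norm_num) (by norm_num)
      have hF2mono : StrictMono F2 := stepMono c2 5 10 15 (by norm_num) (by norm_num)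
      have hF1c : F1 c1 = 10 := by simp only [hF1def]; simp
      have hF2c : F2 c2 = 10 := by simp only [hF2def]; simp
      have hF1r : ∀ q, q ≠ c1 → (-1 < F1 q ∧ F1 q < 1) ∨ (19 < F1 q ∧ F1 q < 21) := by
        intro q hq
        obtain ⟨hb1, hb2⟩ := gsq_bound q
        simp only [hF1def]
        split_ifs with h1
        · left; constructor <;> linarith
        · right; constructor <;> linarith
      have hF2r : ∀ q, q ≠ c2 → (4 < F2 q ∧ F2 q < 6) ∨ (14 < F2 q ∧ F2 q < 16) := by
        intro q hq
        obtain ⟨hb1, hb2⟩ := gsq_bound q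
        simp only [hF2def]
        split_ifs with h1
        · left; constructor <;> linarith
        · right; constructor <;> linarith
      set f : V → ℚ := fun v =>
        if h : v ∈ C1 then F1 (f1 ⟨v, Or.inl h⟩)
        else if h2 : v = x then 10
        else F2 (f2 ⟨v, fun hc => h hc⟩) with hfdef
      -- f agrees with f1 on s1 and with f2 on s2
      have hval1 : ∀ p : ↥s1, f p.1 = F1 (f1 p) := by
        rintro ⟨v, hv⟩
        rcases hv with hv1 | hv1
        · simp only [hfdef]
          simp only [dif_pos hv1]
        · have hvx : v = x := hv1
          subst hvx
          simp only [hfdef]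
          simp only [dif_neg hxC1, dif_pos rfl]
          rw [show (⟨v, Or.inr rfl⟩ : ↥s1) = ⟨v, hxs1⟩ from rfl, ← hc1def, hF1c]
          simp
      have hval2 : ∀ p : ↥s2, f p.1 = F2 (f2 p) := by
        rintro ⟨v, hv⟩
        by_cases hvx : v = x
        · subst hvx
          simp only [hfdef]
          simp only [dif_neg hxC1, dif_pos rfl]
          rw [show (⟨v, hv⟩ : ↥s2) = ⟨v, hxs2⟩ from rfl, ← hc2def, hF2c]
          simp
        · simp only [hfdef]
          simp only [dif_neg (show v ∉ C1 from hv), dif_neg hvx]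
      have hag1 : ∀ p q : ↥s1, f1 p < f1 q ↔ f p.1 < f q.1 := by
        intro p q
        rw [hval1 p, hval1 q]
        exact (hF1mono.lt_iff_lt).symm
      have hag2 : ∀ p q : ↥s2, f2 p < f2 q ↔ f p.1 < f q.1 := by
        intro p q
        rw [hval2 p, hval2 q]
        exact (hF2mono.lt_iff_lt).symm
      have hC1x : ∀ v ∈ C1, v ≠ x := by rintro v ⟨h, -⟩ rfl; exact h rfl
      -- injectivity
      have hinj : Function.Injective f := by
        intro p q hpq
        by_cases hp1 : p ∈ C1 <;> by_cases hq1 : q ∈ C1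
        · have := hval1 ⟨p, Or.inl hp1⟩ ▸ hval1 ⟨q, Or.inl hq1⟩ ▸ hpq
          have h2 := hF1mono.injective (by simpa using this)
          have := hf1 h2
          exact congrArg Subtype.val this
        · -- p ∈ C1, q ∉ C1
          exfalso
          have hpx : p ≠ x := hC1x p hp1
          have hp' : f p = F1 (f1 ⟨p, Or.inl hp1⟩) := hval1 ⟨p, Or.inl hp1⟩
          have hpne : f1 ⟨p, Or.inl hp1⟩ ≠ c1 := by
            intro h
            exact hpx (congrArg Subtype.val (hf1 (h.trans hc1def)))
          have hpr := hF1r _ hpne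
          by_cases hqx : q = x
          · subst hqx
            have hq' : f q = 10 := by simp only [hfdef]; simp [dif_neg hq1]
            rw [hp', hq'] at hpq
            rcases hpr with ⟨h1, h2⟩ | ⟨h1, h2⟩ <;> linarith
          · have hq' : f q = F2 (f2 ⟨q, fun hc => hq1 hc⟩) := hval2 ⟨q, fun hc => hq1 hc⟩
            have hqr := hF2r (f2 ⟨q, fun hc => hq1 hc⟩) ?_
            · rw [hp', hq'] at hpq
              rcases hpr with ⟨h1, h2⟩ | ⟨h1, h2⟩ <;> rcases hqr with ⟨h3, h4⟩ | ⟨h3, h4⟩ <;> linarith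
            · intro h
              exact hqx (congrArg Subtype.val (hf2 (h.trans hc2def)))
        · -- p ∉ C1, q ∈ C1 : symmetric
          exfalso
          have hqx : q ≠ x := hC1x q hq1
          have hq' : f q = F1 (f1 ⟨q, Or.inl hq1⟩) := hval1 ⟨q, Or.inl hq1⟩
          have hqne : f1 ⟨q, Or.inl hq1⟩ ≠ c1 := by
            intro h
            exact hqx (congrArg Subtype.val (hf1 (h.trans hc1def)))
          have hqr := hF1r _ hqne
          by_cases hpx : p = x
          · subst hpx
            have hp' : f p = 10 := by simp only [hfdef]; simp [dif_neg hp1]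
            rw [hp', hq'] at hpq
            rcases hqr with ⟨h1, h2⟩ | ⟨h1, h2⟩ <;> linarith
          · have hp' : f p = F2 (f2 ⟨p, fun hc => hp1 hc⟩) := hval2 ⟨p, fun hc => hp1 hc⟩
            have hpr := hF2r (f2 ⟨p, fun hc => hp1 hc⟩) ?_
            · rw [hp', hq'] at hpq
              rcases hpr with ⟨h1, h2⟩ | ⟨h1, h2⟩ <;> rcases hqr with ⟨h3, h4⟩ | ⟨h3, h4⟩ <;> linarith
            · intro h
              exact hpx (congrArg Subtype.val (hf2 (h.trans hc2def)))
        · -- both ∉ C1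
          by_cases hpx : p = x <;> by_cases hqx : q = x
          · rw [hpx, hqx]
          · exfalso
            subst hpx
            have hp' : f p = 10 := by simp only [hfdef]; simp [dif_neg hp1]
            have hq' : f q = F2 (f2 ⟨q, fun hc => hq1 hc⟩) := hval2 ⟨q, fun hc => hq1 hc⟩
            have hqr := hF2r (f2 ⟨q, fun hc => hq1 hc⟩) ?_
            · rw [hp', hq'] at hpq
              rcases hqr with ⟨h1, h2⟩ | ⟨h1, h2⟩ <;> linarith
            · intro h
              exact hqx (congrArg Subtype.val (hf2 (h.trans hc2def)))
          · exfalso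
            subst hqx
            have hq' : f q = 10 := by simp only [hfdef]; simp [dif_neg hq1]
            have hp' : f p = F2 (f2 ⟨p, fun hc => hp1 hc⟩) := hval2 ⟨p, fun hc => hp1 hc⟩
            have hpr := hF2r (f2 ⟨p, fun hc => hp1 hc⟩) ?_
            · rw [hp', hq'] at hpq
              rcases hpr with ⟨h1, h2⟩ | ⟨h1, h2⟩ <;> linarith
            · intro h
              exact hpx (congrArg Subtype.val (hf2 (h.trans hc2def)))
          · have hp' : f p = F2 (f2 ⟨p, fun hc => hp1 hc⟩) := hval2 ⟨p, fun hc => hp1 hc⟩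
            have hq' : f q = F2 (f2 ⟨q, fun hc => hq1 hc⟩) := hval2 ⟨q, fun hc => hq1 hc⟩
            rw [hp', hq'] at hpq
            have h2 := hF2mono.injective hpq
            exact congrArg Subtype.val (hf2 h2)
      refine ⟨f, hinj, ?_⟩
      intro l hl hlen
      obtain ⟨hchain, hwrap⟩ := hl.2.2.2 hlen
      -- the cycle is contained in s1 or in s2
      have hedge : ∀ p q : V, p ≠ x → q ≠ x → G.Adj p q → (p ∈ C1 ↔ q ∈ C1) := by
        intro p q hp hq hadj
        have hgx : Gx.Adj ⟨p, hp⟩ ⟨q, hq⟩ := by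
          rw [hGx]
          simpa using hadj
        constructor
        · rintro ⟨h, hre⟩
          exact ⟨hq, (by exact hre : Gx.Reachable a ⟨p, hp⟩).trans hgx.reachable⟩
        · rintro ⟨h, hre⟩
          exact ⟨hp, (by exact hre : Gx.Reachable a ⟨q, hq⟩).trans hgx.symm.reachable⟩
      have hsplit : (∀ v ∈ l, v ∈ s1) ∨ (∀ v ∈ l, v ∈ s2) := by
        by_cases hxl : x ∈ l
        · obtain ⟨l1, l2, hldecomp⟩ := List.append_of_mem hxl
          have hnd := hl.2.1
          rw [hldecomp, List.nodup_append] at hnd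
          have hxl1 : x ∉ l1 := fun h => hnd.2.2 x h x List.mem_cons_self rfl
          have hxl2 : x ∉ l2 := by
            have := hnd.2.1
            rw [List.nodup_cons] at this
            exact this.1
          have hrot : (l2 ++ l1).Chain' G.Adj := chain'_rotate hchain hwrap hldecomp
          have hmem : ∀ v ∈ l2 ++ l1, v ≠ x := by
            intro v hv heq
            rw [heq] at hv
            rcases List.mem_append.1 hv with h | h
            · exact hxl2 h
            · exact hxl1 h
          have hchain2 : (l2 ++ l1).Chain' (fun p q => G.Adj p q ∧ p ≠ x ∧ q ≠ x) :=
            chain'_and_of_forall hrot hmem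
          rcases chain'_all_or_none (s := C1) hchain2
            (fun p q h => hedge p q h.2.1 h.2.2 h.1) with hall | hnone
          · left
            intro v hv
            rw [hldecomp] at hv
            rcases List.mem_append.1 hv with h | h
            · exact Or.inl (hall v (List.mem_append.2 (Or.inr h)))
            · rcases List.mem_cons.1 h with rfl | h
              · exact hxs1
              · exact Or.inl (hall v (List.mem_append.2 (Or.inl h)))
          · right
            intro v hv
            rw [hldecomp] at hv
            rcases List.mem_append.1 hv with h | h
            · exact hnone v (List.mem_append.2 (Or.inr h))
            · rcases List.mem_cons.1 h with rfl | h
              · exact hxs2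
              · exact hnone v (List.mem_append.2 (Or.inl h))
        · have hmem : ∀ v ∈ l, v ≠ x := fun v hv h => hxl (h ▸ hv)
          have hchain2 : l.Chain' (fun p q => G.Adj p q ∧ p ≠ x ∧ q ≠ x) :=
            chain'_and_of_forall hchain hmem
          rcases chain'_all_or_none (s := C1) hchain2
            (fun p q h => hedge p q h.2.1 h.2.2 h.1) with hall | hnone
          · exact Or.inl (fun v hv => Or.inl (hall v hv))
          · exact Or.inr (fun v hv => hnone v hv)
      rcases hsplit with hall | hall
      · obtain ⟨l', hl', hlen'⟩ := monoCycle_lift s1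
          (lts := fun u v => f1 u < f1 v) (fun u v => hag1 u v) hall hl
        obtain ⟨B1, hB1, hB1len⟩ := H1 l' hl' (by rw [hlen']; exact hlen)
        rw [← hlen']
        exact transport_subgraph G s1 B1 hB1 hB1len
      · obtain ⟨l', hl', hlen'⟩ := monoCycle_lift s2
          (lts := fun u v => f2 u < f2 v) (fun u v => hag2 u v) hall hl
        obtain ⟨B1, hB1, hB1len⟩ := H2 l' hl' (by rw [hlen']; exact hlen)
        rw [← hlen']
        exact transport_subgraph G s2 B1 hB1 hB1len
    · -- Case (ii): disconnected
      obtain ⟨u⟩ := ‹Nonempty V›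
      set C : Set V := {y | G.Reachable u y} with hCdef
      have huC : u ∈ C := by exact SimpleGraph.Reachable.refl u
      have hex : ∃ w, w ∉ C := by
        by_contra hc
        push_neg at hc
        refine hconn ?_
        rw [SimpleGraph.connected_iff]
        exact ⟨fun p q => ((hc p).symm.trans (hc q)), ‹Nonempty V›⟩
      obtain ⟨w, hw⟩ := hex
      have hne1 : Nonempty ↥C := ⟨⟨u, huC⟩⟩
      have hne2 : Nonempty ↥(Cᶜ) := ⟨⟨w, hw⟩⟩
      have hcard1 : Nat.card ↥C < n := by
        rw [← hcard, Nat.card_coe_set_eq, ← Set.ncard_univ]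
        refine Set.ncard_lt_ncard ?_ Set.finite_univ
        exact Set.ssubset_univ_iff.mpr (fun h => hw (h ▸ Set.mem_univ w))
      have hcard2 : Nat.card ↥(Cᶜ) < n := by
        rw [← hcard, Nat.card_coe_set_eq, ← Set.ncard_univ]
        refine Set.ncard_lt_ncard ?_ Set.finite_univ
        exact Set.ssubset_univ_iff.mpr
          (fun h => (h.symm ▸ Set.mem_univ u : u ∈ Cᶜ) huC)
      obtain ⟨f1, hf1, H1⟩ := IH _ hcard1 ↥C rfl (G.induce C)
      obtain ⟨f2, hf2, H2⟩ := IH _ hcard2 ↥(Cᶜ) rfl (G.induce Cᶜ)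
      set f : V → ℚ := fun v =>
        if h : v ∈ C then gsq (f1 ⟨v, h⟩) else 2 + gsq (f2 ⟨v, h⟩) with hfdef
      have hinj : Function.Injective f := by
        intro p q hpq
        by_cases hp : p ∈ C <;> by_cases hq : q ∈ C
        · simp only [hfdef, dif_pos hp, dif_pos hq] at hpq
          exact congrArg Subtype.val (hf1 (gsq_mono.injective hpq))
        · exfalso
          simp only [hfdef, dif_pos hp, dif_neg hq] at hpq
          obtain ⟨h1, h2⟩ := gsq_bound (f1 ⟨p, hp⟩)
          obtain ⟨h3, h4⟩ := gsq_bound (f2 ⟨q, hq⟩)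
          linarith
        · exfalso
          simp only [hfdef, dif_neg hp, dif_pos hq] at hpq
          obtain ⟨h1, h2⟩ := gsq_bound (f2 ⟨p, hp⟩)
          obtain ⟨h3, h4⟩ := gsq_bound (f1 ⟨q, hq⟩)
          linarith
        · simp only [hfdef, dif_neg hp, dif_neg hq] at hpq
          exact congrArg Subtype.val (hf2 (gsq_mono.injective (add_left_cancel hpq)))
      have hag1 : ∀ p q : ↥C, f1 p < f1 q ↔ f p.1 < f q.1 := by
        intro p q
        simp only [hfdef, dif_pos p.2, dif_pos q.2]
        exact gsq_mono.lt_iff_lt.symm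
      have hag2 : ∀ p q : ↥(Cᶜ), f2 p < f2 q ↔ f p.1 < f q.1 := by
        intro p q
        simp only [hfdef, dif_neg (Set.notMem_of_mem_compl p.2),
          dif_neg (Set.notMem_of_mem_compl q.2), add_lt_add_iff_left]
        exact gsq_mono.lt_iff_lt.symm
      refine ⟨f, hinj, ?_⟩
      intro l hl hlen
      obtain ⟨hchain, hwrap⟩ := hl.2.2.2 hlen
      have hcl : ∀ p q : V, G.Adj p q → (p ∈ C ↔ q ∈ C) := by
        intro p q hadj
        constructor
        · intro h
          exact (h : G.Reachable u p).trans hadj.reachable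
        · intro h
          exact (h : G.Reachable u q).trans hadj.symm.reachable
      rcases chain'_all_or_none (s := C) hchain (fun p q h => hcl p q h) with hall | hnone
      · obtain ⟨l', hl', hlen'⟩ := monoCycle_lift C (lts := fun p q : ↥C => f1 p < f1 q)
          (fun p q => hag1 p q) hall hl
        obtain ⟨B1, hB1, hB1len⟩ := H1 l' hl' (by rw [hlen']; exact hlen)
        rw [← hlen']
        exact transport_subgraph G C B1 hB1 hB1len
      · obtain ⟨l', hl', hlen'⟩ := monoCycle_lift Cᶜ (lts := fun p q : ↥(Cᶜ) => f2 p < f2 q)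
          (fun p q => hag2 p q) (fun a ha => hnone a ha) hl
        obtain ⟨B1, hB1, hB1len⟩ := H2 l' hl' (by rw [hlen']; exact hlen)
        rw [← hlen']
        exact transport_subgraph G Cᶜ B1 hB1 hB1len

end Key

section Final
variable {V : Type*}

theorem circAlt_eq_sup_blocks' [Finite V] [Nonempty V] (G : SimpleGraph V) :
    circAlt G = sSup {n | ∃ B : G.Subgraph, IsBlock B ∧ circAlt B.coe = n} := by
  classical
  have hVfin := Fintype.ofFinite V
  set S := {n | ∃ B : G.Subgraph, IsBlock B ∧ circAlt B.coe = n} with hS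
  have hub : ∀ m ∈ S, m ≤ circAlt G := by
    rintro m ⟨B, hB, rfl⟩
    exact circAlt_le_of_hom_s8 (Subtype.val_injective) (fun a b hab => B.adj_sub hab)
  have hSbdd : BddAbove S := ⟨circAlt G, hub⟩
  refine le_antisymm ?_ (csSup_le' hub)
  obtain ⟨f, hf, H⟩ := key_lemma (Nat.card V) V rfl G
  set r : V → ℕ := fun v => (Finset.univ.filter (fun u => f u < f v)).card with hrdef
  have hmono : ∀ a b : V, f a < f b → r a < r b := by
    intro a b hab
    have hsub : Finset.univ.filter (fun u => f u < f a) ⊆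
        Finset.univ.filter (fun u => f u < f b) := by
      intro x hx
      simp only [Finset.mem_filter] at hx ⊢
      exact ⟨hx.1, hx.2.trans hab⟩
    have hane : (Finset.univ.filter (fun u => f u < f a)) ≠
        (Finset.univ.filter (fun u => f u < f b)) := by
      intro heq
      have ha : a ∈ Finset.univ.filter (fun u => f u < f b) := by
        simp only [Finset.mem_filter]
        exact ⟨Finset.mem_univ a, hab⟩
      rw [← heq] at ha
      simp only [Finset.mem_filter] at ha
      exact lt_irrefl _ ha.2
    exact Finset.card_lt_card (HasSubset.Subset.ssubset_of_ne hsub hane)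
  have hiff : ∀ a b : V, r a < r b ↔ f a < f b := by
    intro a b
    constructor
    · intro hr
      rcases lt_trichotomy (f a) (f b) with h | h | h
      · exact h
      · rw [hf h] at hr
        exact absurd hr (lt_irrefl _)
      · exact absurd (hmono b a h) (by omega)
    · exact hmono a b
  have hrinj : Function.Injective r := by
    intro a b hr
    rcases lt_trichotomy (f a) (f b) with h | h | h
    · exact absurd (hmono a b h) (by omega)
    · exact hf h
    · exact absurd (hmono b a h) (by omega)
  have h1 : circAlt G ≤ maxCycleLen G (fun a b => f a < f b) := by
    have := circAlt_le (G := G) hrinj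
    rwa [maxCycleLen_congr (fun a b => hiff a b)] at this
  obtain ⟨l, hl, hlen⟩ := exists_maxCycleLen (G := G) (lt := fun a b => f a < f b)
  rcases le_or_gt 2 l.length with h2 | h2
  · obtain ⟨B, hBns, hBlen⟩ := H l hl h2
    obtain ⟨B', hBB', hblock⟩ := exists_isBlock_ge hBns
    have hle2 : circAlt B.coe ≤ circAlt B'.coe := by
      refine circAlt_le_of_hom_s8 (φ := fun p : ↥B.verts => (⟨p.1, hBB'.1 p.2⟩ : ↥B'.verts))
        (fun p q h => Subtype.ext (by simpa using congrArg Subtype.val h)) ?_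
      intro p q hadj
      exact hBB'.2 hadj
    have hmem : circAlt B'.coe ∈ S := ⟨B', hblock, rfl⟩
    calc circAlt G ≤ maxCycleLen G (fun a b => f a < f b) := h1
      _ = l.length := hlen.symm
      _ ≤ circAlt B.coe := hBlen
      _ ≤ circAlt B'.coe := hle2
      _ ≤ sSup S := le_csSup hSbdd hmem
  · obtain ⟨B', hBB', hblock⟩ :=
      exists_isBlock_ge (nonseparable_singletonSubgraph G (Classical.arbitrary V))
    have hne : Nonempty ↥B'.verts := hblock.1.1.nonempty
    have hone : 1 ≤ circAlt B'.coe := one_le_circAlt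
    have hmem : circAlt B'.coe ∈ S := ⟨B', hblock, rfl⟩
    calc circAlt G ≤ maxCycleLen G (fun a b => f a < f b) := h1
      _ = l.length := hlen.symm
      _ ≤ 1 := by omega
      _ ≤ circAlt B'.coe := hone
      _ ≤ sSup S := le_csSup hSbdd hmem

end Final

/-- The circular altitude of a finite graph equals the maximum of the circular
altitudes of its blocks. -/
theorem circAlt_eq_sup_blocks {V : Type*} [Finite V] [Nonempty V] (G : SimpleGraph V) :
    circAlt G = sSup {n | ∃ B : G.Subgraph, IsBlock B ∧ circAlt B.coe = n} := by
  exact circAlt_eq_sup_blocks' G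
end

section
/- If there exists a graph homomorphism from a finite simple graph G to a finite simple graph H, then α°(G) ≤ α°(H). -/
open SimpleGraph

/-- If there is a graph homomorphism from `G` to `H`, then `α°(G) ≤ α°(H)`. -/
theorem circAlt_le_of_hom {V W : Type*} [Finite V] [Finite W]
    (G : SimpleGraph V) (H : SimpleGraph W) (f : G →g H) :
    circAlt G ≤ circAlt H := by
  classical
  have : Fintype V := Fintype.ofFinite V
  have : Fintype W := Fintype.ofFinite W
  obtain ⟨g0, hg0⟩ := exists_injective_nat W
  have hne : {n | ∃ g : W → ℕ, Function.Injective g ∧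
      maxCycleLen H (fun a b => g a < g b) = n}.Nonempty := ⟨_, g0, hg0, rfl⟩
  obtain ⟨g, hg, hgmax⟩ := Nat.sInf_mem hne
  set N := Fintype.card V with hN
  let e : V ↪ Fin N := (Fintype.equivFin V).toEmbedding
  let F : V → ℕ := fun v => g (f v) * N + (e v : ℕ)
  have hkey : ∀ u v : V, g (f u) < g (f v) → F u < F v := by
    intro u v h
    have h1 : (e u : ℕ) < N := (e u).2
    calc g (f u) * N + (e u : ℕ) < g (f u) * N + N := Nat.add_lt_add_left h1 _
      _ = (g (f u) + 1) * N := by ring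
      _ ≤ g (f v) * N := Nat.mul_le_mul_right N (Nat.succ_le_of_lt h)
      _ ≤ g (f v) * N + (e v : ℕ) := Nat.le_add_right _ _
  have hFle : ∀ u v : V, F u < F v → g (f u) ≤ g (f v) := by
    intro u v h
    by_contra hlt
    push_neg at hlt
    exact absurd h (not_lt_of_gt (hkey v u hlt))
  have hFinj : Function.Injective F := by
    intro u v h
    have heq : g (f u) = g (f v) := by
      rcases lt_trichotomy (g (f u)) (g (f v)) with h' | h' | h'
      · exact absurd h (ne_of_lt (hkey u v h'))
      · exact h'
      · exact absurd h.symm (ne_of_lt (hkey v u h'))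
    have h' : g (f u) * N + (e u : ℕ) = g (f v) * N + (e v : ℕ) := h
    rw [heq] at h'
    exact e.injective (Fin.ext (Nat.add_left_cancel h'))
  have hsub : {m | ∃ l : List V, MonoCycle G (fun a b => F a < F b) l ∧ l.length = m} ⊆
      {m | ∃ l : List W, MonoCycle H (fun a b => g a < g b) l ∧ l.length = m} := by
    rintro m ⟨l, ⟨hne', hnd, hch, hcyc⟩, rfl⟩
    -- the map of a mono cycle is monotone in g ∘ f
    have hchain : l.Chain' (fun a b => g (f a) < g (f b)) := by
      simp only [List.Chain', List.isChain_iff_getElem] at hch ⊢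
      intro i hi
      have hlen : 2 ≤ l.length := by omega
      obtain ⟨hadj, -⟩ := hcyc hlen
      simp only [List.Chain', List.isChain_iff_getElem] at hadj
      have h1 := hch i hi
      have h2 := hadj i hi
      have hfne := (f.map_adj h2).ne
      rcases lt_or_eq_of_le (hFle _ _ h1) with h' | h'
      · exact h'
      · exact absurd (hg h') hfne
    have hchainW : (l.map f).Chain' (fun a b => g a < g b) :=
      (List.isChain_map f).mpr hchain
    refine ⟨l.map f, ⟨by simpa using hne', ?_, hchainW, ?_⟩, by simp⟩
    · -- nodup
      haveI : IsTrans W (fun a b => g a < g b) := ⟨fun a b c h1 h2 => lt_trans h1 h2⟩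
      have hp : (l.map f).Pairwise (fun a b => g a < g b) :=
        List.isChain_iff_pairwise.mp hchainW
      exact hp.imp fun h => by rintro rfl; exact lt_irrefl _ h
    · intro hlen2
      have hlen : 2 ≤ l.length := by simpa using hlen2
      obtain ⟨hadj, hlast⟩ := hcyc hlen
      constructor
      · exact (List.isChain_map f).mpr (hadj.imp fun _ _ h => f.map_adj h)
      · intro a b ha hb
        rw [List.head?_map] at ha
        rw [List.getLast?_map] at hb
        obtain ⟨a0, ha0, rfl⟩ := Option.map_eq_some_iff.mp ha
        obtain ⟨b0, hb0, rfl⟩ := Option.map_eq_some_iff.mp hb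
        exact f.map_adj (hlast a0 b0 ha0 hb0)
  have hbdd : BddAbove {m | ∃ l : List W, MonoCycle H (fun a b => g a < g b) l ∧ l.length = m} := by
    refine ⟨Fintype.card W, ?_⟩
    rintro m ⟨l, ⟨-, hnd, -, -⟩, rfl⟩
    exact hnd.length_le_card
  have hle : maxCycleLen G (fun a b => F a < F b) ≤ maxCycleLen H (fun a b => g a < g b) := by
    rcases Set.eq_empty_or_nonempty
        {m | ∃ l : List V, MonoCycle G (fun a b => F a < F b) l ∧ l.length = m} with h | h
    · rw [maxCycleLen, h, csSup_empty]
      exact Nat.zero_le _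
    · exact csSup_le_csSup hbdd h hsub
  calc circAlt G ≤ maxCycleLen G (fun a b => F a < F b) := Nat.sInf_le ⟨F, hFinj, rfl⟩
    _ ≤ maxCycleLen H (fun a b => g a < g b) := hle
    _ = circAlt H := hgmax
end

section
/- The circular altitude of a finite simple graph equals the circular altitude of its core. -/
open SimpleGraph

/-- A graph is a core graph if every homomorphism from it to itself is an
isomorphism. -/
def IsCoreGraph {W : Type*} (C : SimpleGraph W) : Prop :=
  ∀ φ : C →g C, ∃ ψ : C ≃g C, ∀ v, ψ v = φ v

section Aux

variable {V W : Type*}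

/-- A monotonic cycle maps along a homomorphism compatible with the orders. -/
lemma MonoCycle.map {G : SimpleGraph V} {H : SimpleGraph W} (r : G →g H)
    (f : W → ℕ) (g : V → ℕ)
    (compat : ∀ a b : V, G.Adj a b → g a < g b → f (r a) < f (r b))
    {l : List V} (hl : MonoCycle G (fun a b => g a < g b) l) :
    MonoCycle H (fun a b => f a < f b) (l.map r) := by
  obtain ⟨hne, hnd, hch, hcyc⟩ := hl
  have hchain : l.Chain' (fun a b => f (r a) < f (r b)) := by
    by_cases h2 : 2 ≤ l.length
    · obtain ⟨hadj, -⟩ := hcyc h2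
      unfold List.Chain' at hch hadj ⊢
      rw [List.isChain_iff_getElem] at hch hadj ⊢
      intro i hi
      exact compat _ _ (hadj i hi) (hch i hi)
    · match l with
      | [] => exact List.isChain_nil
      | [a] => exact List.isChain_singleton a
      | a :: b :: t => exact absurd (by simp) h2
  have hmap : (l.map r).Chain' (fun a b => f a < f b) := (List.isChain_map r).2 hchain
  refine ⟨by simpa using hne, ?_, hmap, ?_⟩
  · haveI : IsTrans W (fun a b => f a < f b) := ⟨fun a b c => lt_trans⟩
    have hp : (l.map r).Pairwise (fun a b => f a < f b) :=
      List.isChain_iff_pairwise.mp hmap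
    exact hp.imp fun h => by rintro rfl; exact lt_irrefl _ h
  · intro h2
    rw [List.length_map] at h2
    obtain ⟨hadj, hlast⟩ := hcyc h2
    refine ⟨(List.isChain_map r).2 (hadj.imp fun a b h => r.map_adj h), ?_⟩
    intro a b ha hb
    rw [List.head?_map] at ha
    rw [List.getLast?_map] at hb
    obtain ⟨a0, ha0, rfl⟩ := Option.map_eq_some_iff.mp ha
    obtain ⟨b0, hb0, rfl⟩ := Option.map_eq_some_iff.mp hb
    exact r.map_adj (hlast a0 b0 ha0 hb0)

lemma bddAbove_monoCycle [Finite V] (G : SimpleGraph V) (lt : V → V → Prop) :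
    BddAbove {m | ∃ l : List V, MonoCycle G lt l ∧ l.length = m} := by
  haveI := Fintype.ofFinite V
  exact ⟨Fintype.card V, fun m ⟨l, hl, hm⟩ => hm ▸ hl.2.1.length_le_card⟩

lemma maxCycleLen_le [Finite W] {G : SimpleGraph V} {H : SimpleGraph W} (r : G →g H)
    (f : W → ℕ) (g : V → ℕ)
    (compat : ∀ a b : V, G.Adj a b → g a < g b → f (r a) < f (r b)) :
    maxCycleLen G (fun a b => g a < g b) ≤ maxCycleLen H (fun a b => f a < f b) := by
  apply csSup_le_csSup' (bddAbove_monoCycle H _)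
  rintro m ⟨l, hl, rfl⟩
  exact ⟨l.map r, MonoCycle.map r f g compat hl, by simp⟩

lemma aux_le {x y a b N : ℕ} (hb : b < N) (h : x * N + a ≤ y * N + b) : x ≤ y := by
  by_contra hc
  push_neg at hc
  have h2 : (y + 1) * N ≤ x * N := Nat.mul_le_mul_right N hc
  rw [add_mul, one_mul] at h2
  omega

end Aux

/-- The circular altitude of a finite graph equals the circular altitude of its
core: a subgraph `C` which is a core graph and is homomorphically equivalent
to `G`. -/
theorem circAlt_core {V : Type*} [Finite V] (G : SimpleGraph V) (C : G.Subgraph)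
    (hcore : IsCoreGraph C.coe)
    (h₁ : Nonempty (G →g C.coe)) (h₂ : Nonempty (C.coe →g G)) :
    circAlt C.coe = circAlt G := by
  clear hcore h₂
  obtain ⟨r⟩ := h₁
  apply le_antisymm
  · -- use the inclusion C.coe →g G
    have hGset : {n | ∃ f : V → ℕ, Function.Injective f ∧
        maxCycleLen G (fun a b => f a < f b) = n}.Nonempty := by
      obtain ⟨f, hf⟩ := exists_injective_nat V
      exact ⟨_, f, hf, rfl⟩
    obtain ⟨f, hf, hval⟩ := Nat.sInf_mem hGset
    calc circAlt C.coe ≤ maxCycleLen C.coe (fun a b => f a.val < f b.val) :=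
          Nat.sInf_le ⟨fun a => f a.val, hf.comp Subtype.val_injective, rfl⟩
      _ ≤ maxCycleLen G (fun a b => f a < f b) :=
          maxCycleLen_le C.hom f (fun a => f a.val) (fun a b _ h => h)
      _ = circAlt G := hval
  · -- use the homomorphism r : G →g C.coe
    have hCset : {n | ∃ f : C.verts → ℕ, Function.Injective f ∧
        maxCycleLen C.coe (fun a b => f a < f b) = n}.Nonempty := by
      obtain ⟨f, hf⟩ := exists_injective_nat C.verts
      exact ⟨_, f, hf, rfl⟩
    obtain ⟨f, hf, hval⟩ := Nat.sInf_mem hCset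
    haveI := Fintype.ofFinite V
    obtain ⟨g, hginj, compat⟩ : ∃ g : V → ℕ, Function.Injective g ∧
        (∀ a b : V, G.Adj a b → g a < g b → f (r a) < f (r b)) := by
      refine ⟨fun v => f (r v) * Fintype.card V + (Fintype.equivFin V v : ℕ), ?_, ?_⟩
      · intro v w h
        replace h : f (r v) * Fintype.card V + ((Fintype.equivFin V) v : ℕ)
            = f (r w) * Fintype.card V + ((Fintype.equivFin V) w : ℕ) := h
        have hxy : f (r v) = f (r w) := le_antisymm
          (aux_le (Fintype.equivFin V w).isLt h.le)
          (aux_le (Fintype.equivFin V v).isLt h.ge)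
        rw [hxy] at h
        have : ((Fintype.equivFin V) v : ℕ) = ((Fintype.equivFin V) w : ℕ) :=
          Nat.add_left_cancel h
        exact (Fintype.equivFin V).injective (Fin.val_injective this)
      · intro a b hab hgab
        replace hgab : f (r a) * Fintype.card V + ((Fintype.equivFin V) a : ℕ)
            < f (r b) * Fintype.card V + ((Fintype.equivFin V) b : ℕ) := hgab
        have hne : r a ≠ r b := (r.map_adj hab).ne
        have hfne : f (r a) ≠ f (r b) := fun h => hne (hf h)
        exact lt_of_le_of_ne (aux_le (Fintype.equivFin V b).isLt hgab.le) hfne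
    calc circAlt G ≤ maxCycleLen G (fun a b => g a < g b) :=
          Nat.sInf_le ⟨g, hginj, rfl⟩
      _ ≤ maxCycleLen C.coe (fun a b => f a < f b) :=
          maxCycleLen_le r f g compat
      _ = circAlt C.coe := hval
end

section
/- Let U_G and U_H be linear orderings of V(G) and V(H) respectively, and let U be the lexicographic ordering of V(G) × V(H) induced by U_G and U_H. Then every U-monotonic cycle in G □ H of length m ≥ 2 either lies entirely in a single layer {g} × V(H) and projects to a U_H-monotonic cycle of length m in H, or lies entirely in a single layer V(G) × {h} and projects to a U_G-monotonic cycle of length m in G. -/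
open SimpleGraph

/-- With the lexicographic ordering on `V(G) × V(H)` induced by orderings `uG`
and `uH`, every monotonic cycle of length at least 2 in `G □ H` lies entirely in
a single layer `{g} × V(H)` and projects to a `uH`-monotonic cycle in `H`, or
lies entirely in a single layer `V(G) × {h}` and projects to a `uG`-monotonic
cycle in `G` (the projections have the same length `m` as the cycle). -/
theorem monoCycle_boxProd_lex {V W : Type*} (G : SimpleGraph V) (H : SimpleGraph W)
    (uG : V → ℕ) (uH : W → ℕ)
    (hG : Function.Injective uG) (hH : Function.Injective uH)
    (l : List (V × W))
    (hl : MonoCycle (G.boxProd H)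
      (fun p q => uG p.1 < uG q.1 ∨ (p.1 = q.1 ∧ uH p.2 < uH q.2)) l)
    (h2 : 2 ≤ l.length) :
    (∃ g : V, (∀ p ∈ l, p.1 = g) ∧
      MonoCycle H (fun a b => uH a < uH b) (l.map Prod.snd)) ∨
    (∃ h : W, (∀ p ∈ l, p.2 = h) ∧
      MonoCycle G (fun a b => uG a < uG b) (l.map Prod.fst)) := by
  obtain ⟨hne, hnd, hch, hcyc⟩ := hl
  obtain ⟨hadjch, hba⟩ := hcyc h2
  set a := l.head hne with ha
  set b := l.getLast hne with hb
  have hhead : l.head? = some a := List.head?_eq_head hne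
  have hlast : l.getLast? = some b := List.getLast?_eq_getLast hne
  have hadj : (G.boxProd H).Adj b a := hba a b hhead hlast
  -- the weak order relation
  set r : (V × W) → (V × W) → Prop :=
    fun p q => uG p.1 ≤ uG q.1 ∧ uH p.2 ≤ uH q.2 with hr
  have hrchain : l.Chain' r := by
    unfold List.Chain' at hch hadjch ⊢
    rw [List.isChain_iff_getElem] at hch hadjch ⊢
    intro i hi
    have h1 := hch i hi
    have h2' := hadjch i hi
    constructor
    · rcases h1 with h | ⟨h, _⟩
      · exact h.le
      · exact le_of_eq (congrArg uG h)
    · rw [boxProd_adj] at h2'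
      rcases h2' with ⟨_, h⟩ | ⟨_, heq⟩
      · exact le_of_eq (congrArg uH h)
      · rcases h1 with h | ⟨_, h⟩
        · exact absurd h (by rw [heq]; exact lt_irrefl _)
        · exact h.le
  haveI : IsTrans (V × W) r := ⟨fun x y z hxy hyz => ⟨hxy.1.trans hyz.1, hxy.2.trans hyz.2⟩⟩
  have hpw : l.Pairwise r := List.isChain_iff_pairwise.mp hrchain
  rw [List.pairwise_iff_get] at hpw
  have hlen : 0 < l.length := List.length_pos_iff.mpr hne
  have hagets : a = l.get ⟨0, hlen⟩ := by
    rw [ha, List.head_eq_getElem_zero hne]; rfl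
  have hbgets : b = l.get ⟨l.length - 1, by omega⟩ := by
    rw [hb, List.getLast_eq_getElem]; rfl
  have key : ∀ p ∈ l, r a p ∧ r p b := by
    intro p hp
    obtain ⟨i, hip⟩ := List.mem_iff_get.mp hp
    constructor
    · rcases Nat.eq_zero_or_pos i.1 with h0 | h0
      · have : a = p := by rw [hagets, ← hip]; congr 1; exact Fin.ext h0.symm
        rw [this]; exact ⟨le_refl _, le_refl _⟩
      · rw [hagets, ← hip]; exact hpw _ _ h0
    · rcases eq_or_lt_of_le (Nat.le_sub_one_of_lt i.2) with h0 | h0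
      · have : p = b := by rw [hbgets, ← hip]; congr 1; exact Fin.ext h0
        rw [this]; exact ⟨le_refl _, le_refl _⟩
      · rw [hbgets, ← hip]; exact hpw _ ⟨l.length - 1, by omega⟩ h0
  rw [boxProd_adj] at hadj
  rcases hadj with ⟨hGba, hsnd⟩ | ⟨hHba, hfst⟩
  · -- all second coordinates equal, project to G
    right
    have hsame : ∀ p ∈ l, p.2 = a.2 := by
      intro p hp
      obtain ⟨h1, h2'⟩ := key p hp
      exact hH (le_antisymm (hsnd ▸ h2'.2) h1.2)
    refine ⟨a.2, hsame, ?_, ?_, ?_, ?_⟩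
    · simp [hne]
    · refine List.Nodup.map_on ?_ hnd
      intro x hx y hy hxy
      exact Prod.ext hxy ((hsame x hx).trans (hsame y hy).symm)
    · unfold List.Chain' at *; rw [List.isChain_map, List.isChain_iff_getElem] at *
      intro i hi
      have h1 := hch i (by simpa using hi)
      rcases h1 with h | ⟨_, h⟩
      · exact h
      · exfalso
        have e1 := hsame _ (List.getElem_mem (by omega : i < l.length))
        have e2 := hsame _ (List.getElem_mem (by omega : i+1 < l.length))
        rw [e1, e2] at h
        exact lt_irrefl _ h
    · intro _
      constructor
      · unfold List.Chain' at *; rw [List.isChain_map, List.isChain_iff_getElem] at *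
        intro i hi
        have h1 := hadjch i (by simpa using hi)
        rw [boxProd_adj] at h1
        rcases h1 with ⟨h, _⟩ | ⟨h, _⟩
        · exact h
        · exfalso
          have e1 := hsame _ (List.getElem_mem (by omega : i < l.length))
          have e2 := hsame _ (List.getElem_mem (by omega : i+1 < l.length))
          rw [e1, e2] at h
          exact H.irrefl h
      · intro x y hx hy
        rw [List.head?_map, hhead] at hx
        rw [List.getLast?_map, hlast] at hy
        simp only [Option.map_some, Option.some_inj] at hx hy
        rw [← hx, ← hy]
        exact hGba
  · -- all first coordinates equal, project to H
    left
    have hsame : ∀ p ∈ l, p.1 = a.1 := by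
      intro p hp
      obtain ⟨h1, h2'⟩ := key p hp
      exact hG (le_antisymm (hfst ▸ h2'.1) h1.1)
    refine ⟨a.1, hsame, ?_, ?_, ?_, ?_⟩
    · simp [hne]
    · refine List.Nodup.map_on ?_ hnd
      intro x hx y hy hxy
      exact Prod.ext ((hsame x hx).trans (hsame y hy).symm) hxy
    · unfold List.Chain' at *; rw [List.isChain_map, List.isChain_iff_getElem] at *
      intro i hi
      have h1 := hch i (by simpa using hi)
      rcases h1 with h | ⟨_, h⟩
      · exfalso
        have e1 := hsame _ (List.getElem_mem (by omega : i < l.length))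
        have e2 := hsame _ (List.getElem_mem (by omega : i+1 < l.length))
        rw [e1, e2] at h
        exact lt_irrefl _ h
      · exact h
    · intro _
      constructor
      · unfold List.Chain' at *; rw [List.isChain_map, List.isChain_iff_getElem] at *
        intro i hi
        have h1 := hadjch i (by simpa using hi)
        rw [boxProd_adj] at h1
        rcases h1 with ⟨h, _⟩ | ⟨h, _⟩
        · exfalso
          have e1 := hsame _ (List.getElem_mem (by omega : i < l.length))
          have e2 := hsame _ (List.getElem_mem (by omega : i+1 < l.length))
          rw [e1, e2] at h
          exact G.irrefl h
        · exact h
      · intro x y hx hy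
        rw [List.head?_map, hhead] at hx
        rw [List.getLast?_map, hlast] at hy
        simp only [Option.map_some, Option.some_inj] at hx hy
        rw [← hx, ← hy]
        exact hHba
end
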